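/- arXiv:1506.01345 — 3 statements merged into one kernel-verified Lean document; each statement's English description precedes it below -/
import Mathlib

section
/- For each t ∈ (0,∞), let ν_t: ℂ[X] → ℂ be the unital symmetric linear functional with ν_t(X^{2n}) = Σ_{k=1}^n m^{(k)}_n t^k, where m^{(k)}_n counts pairs (π,ρ) ∈ NC(n)² with M_{π,ρ} having exactly k orbits. Then for every p ∈ ℕ there is a polynomial Q_p ∈ ℤ[t] with Q_p(0) = 0 and Q_p'(0) = m^{(1)}_p such that κ_{2p}(ν_t) = Q_p(t) for all t > 0; consequently lim_{t→0} (1/t)·κ_{2p}(ν_t) = m^{(1)}_p. -/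
open scoped Classical

/-- A setoid (partition) of `Fin n` is non-crossing if there is no crossing
`a < b < c < d` with `a ∼ c`, `b ∼ d` but `a` and `b` in distinct blocks. -/
def IsNC {n : ℕ} (S : Setoid (Fin n)) : Prop :=
  ∀ a b c d : Fin n, a < b → b < c → c < d → S.r a c → S.r b d → S.r a b

/-- A partition is a pairing if every block has exactly two elements. -/
def IsPairing {m : ℕ} (T : Setoid (Fin m)) : Prop :=
  ∀ x : Fin m, ∃ y : Fin m, y ≠ x ∧ T.r x y ∧ ∀ z : Fin m, T.r x z → z = x ∨ z = y

/-- The block of `i` in the partition `S`, as a finset. -/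
noncomputable def blockOf {n : ℕ} (S : Setoid (Fin n)) (i : Fin n) : Finset (Fin n) :=
  Finset.univ.filter (fun j => S.r i j)

lemma blockOf_nonempty {n : ℕ} (S : Setoid (Fin n)) (i : Fin n) :
    (blockOf S i).Nonempty :=
  ⟨i, by simp [blockOf, S.iseqv.refl i]⟩

/-- The permutation `P_S` which performs an increasing cycle on every block of `S`:
it sends `i` to the next larger element of its block, or to the minimum of the
block if `i` is the largest element of its block. -/
noncomputable def nextP {n : ℕ} (S : Setoid (Fin n)) (i : Fin n) : Fin n :=
  if h : ((blockOf S i).filter (fun j => i < j)).Nonempty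
  then ((blockOf S i).filter (fun j => i < j)).min' h
  else (blockOf S i).min' (blockOf_nonempty S i)

/-- The inverse permutation `P_S⁻¹` (decreasing cycle on every block of `S`). -/
noncomputable def prevP {n : ℕ} (S : Setoid (Fin n)) (i : Fin n) : Fin n :=
  if h : ((blockOf S i).filter (fun j => j < i)).Nonempty
  then ((blockOf S i).filter (fun j => j < i)).max' h
  else (blockOf S i).max' (blockOf_nonempty S i)

/-- `0`-indexed version of the point `2i-1` of `{1,…,2n}`. -/
def dEven {n : ℕ} (j : Fin n) : Fin (2*n) := ⟨2*j.val, by have := j.isLt; omega⟩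

/-- `0`-indexed version of the point `2i` of `{1,…,2n}`. -/
def dOdd {n : ℕ} (j : Fin n) : Fin (2*n) := ⟨2*j.val+1, by have := j.isLt; omega⟩

/-- The doubling construction `π ↦ A(π)`: the pairing of `{1,…,2n}` generated by
pairing each point `2i` with `2P_π(i) - 1`, so that the associated permutation
satisfies `P_{A(π)}(2i) = 2P_π(i) - 1` and `P_{A(π)}(2i-1) = 2P_π⁻¹(i)`. -/
noncomputable def archSetoid {n : ℕ} (S : Setoid (Fin n)) : Setoid (Fin (2*n)) :=
  Relation.EqvGen.setoid (fun a b => ∃ j : Fin n, a = dOdd j ∧ b = dEven (nextP S j))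

/-- The meandric system permutation `M_{π,ρ} ∈ S_{2n}`, defined by
`M_{π,ρ}(2i-1) = 2P_π⁻¹(i)` and `M_{π,ρ}(2i) = 2P_ρ(i) - 1` (here `0`-indexed). -/
noncomputable def meanderMap {n : ℕ} (π ρ : Setoid (Fin n)) (x : Fin (2*n)) : Fin (2*n) :=
  if x.val % 2 = 0
  then dOdd (prevP π ⟨x.val / 2, by have := x.isLt; omega⟩)
  else dEven (nextP ρ ⟨x.val / 2, by have := x.isLt; omega⟩)

/-- The orbit partition of a map. -/
def orbitSetoid {m : ℕ} (f : Fin m → Fin m) : Setoid (Fin m) :=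
  Relation.EqvGen.setoid (fun a b => f a = b)

/-- Number of orbits of a map. -/
noncomputable def numOrbits {m : ℕ} (f : Fin m → Fin m) : ℕ :=
  Nat.card (Quotient (orbitSetoid f))

/-- `S` is a union of blocks of the partition `T`. -/
def IsBlockUnion {m : ℕ} (T : Setoid (Fin m)) (S : Set (Fin m)) : Prop :=
  ∀ x ∈ S, ∀ y, T.r x y → y ∈ S

/-- `S` is invariant under `f`. -/
def MInvariant {m : ℕ} (f : Fin m → Fin m) (S : Set (Fin m)) : Prop :=
  ∀ x ∈ S, f x ∈ S

/-- The meandric system `M_{π,ρ}` is reducible: some proper subinterval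
`{a,…,b}` of `{1,…,2n}` is invariant under `M_{π,ρ}`. -/
noncomputable def Reducible {n : ℕ} (π ρ : Setoid (Fin n)) : Prop :=
  ∃ a b : Fin (2*n), a ≤ b ∧ b.val - a.val < 2*n - 1 ∧
    MInvariant (meanderMap π ρ) {x | a ≤ x ∧ x ≤ b}

/-- The join in the lattice of non-crossing partitions: the smallest
non-crossing partition above both `π` and `ρ`. -/
noncomputable def ncJoin {m : ℕ} (π ρ : Setoid (Fin m)) : Setoid (Fin m) :=
  sInf {τ | IsNC τ ∧ π ≤ τ ∧ ρ ≤ τ}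

/-- The moment-cumulant formula of free probability: `mom n` is the sum over all
non-crossing partitions of `{1,…,n}` of the products of cumulants `κ` indexed
by the block sizes.  This uniquely determines the free cumulants `κ n`, `n ≥ 1`,
of a sequence of moments. -/
def MomCum {F : Type*} [Field F] (mom κ : ℕ → F) : Prop :=
  ∀ n : ℕ, 0 < n →
    mom n = ∑ᶠ S ∈ {S : Setoid (Fin n) | IsNC S}, ∏ᶠ B ∈ Setoid.classes S, κ B.ncard

/-- The number of irreducible meandric systems on `2k` bridges, described as the
number of pairs `(π,ρ) ∈ NC(k)²` with `π ∨ ρ = 1_k`, `π ∧ ρ = 0_k`. -/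
noncomputable def mirr (k : ℕ) : ℕ :=
  Nat.card {pr : Setoid (Fin k) × Setoid (Fin k) //
    IsNC pr.1 ∧ IsNC pr.2 ∧ ncJoin pr.1 pr.2 = ⊤ ∧ pr.1 ⊓ pr.2 = ⊥}

/-- The number of pairs `(π,ρ) ∈ NC(n)²` whose meandric system `M_{π,ρ}` has
exactly `k` orbits (connected components). -/
noncomputable def mcount (n k : ℕ) : ℕ :=
  Nat.card {pr : Setoid (Fin n) × Setoid (Fin n) //
    IsNC pr.1 ∧ IsNC pr.2 ∧ numOrbits (meanderMap pr.1 pr.2) = k}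

/-- The number of meanders on `2n` bridges. -/
noncomputable def meanderNum (n : ℕ) : ℕ := mcount n 1

section MeanderAux

open Polynomial

noncomputable instance setoidFinFin (n : ℕ) : Finite (Setoid (Fin n)) :=
  Finite.of_injective (fun S => S.r) fun _ _ h =>
    Setoid.ext fun x y => iff_of_eq (congrFun (congrFun h x) y)

/-- The even-moment polynomial in `ℤ[t]`. -/
noncomputable def Mpoly (n : ℕ) : Polynomial ℤ :=
  if n % 2 = 0 then
    ∑ k ∈ Finset.Icc 1 (n/2), Polynomial.C (mcount (n/2) k : ℤ) * Polynomial.X ^ k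
  else 0

lemma Mpoly_coeff_zero (n : ℕ) : (Mpoly n).coeff 0 = 0 := by
  unfold Mpoly
  split
  · rw [Polynomial.finset_sum_coeff]
    refine Finset.sum_eq_zero fun k hk => ?_
    have hk1 : 1 ≤ k := (Finset.mem_Icc.1 hk).1
    simp [Polynomial.coeff_C_mul, Polynomial.coeff_X_pow, Nat.ne_of_lt hk1]
  · simp

lemma Mpoly_coeff_one (p : ℕ) (hp : 0 < p) : (Mpoly (2*p)).coeff 1 = (mcount p 1 : ℤ) := by
  unfold Mpoly
  rw [if_pos (by omega)]
  rw [Polynomial.finset_sum_coeff]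
  have h2 : (2*p)/2 = p := by omega
  rw [h2]
  rw [Finset.sum_eq_single 1]
  · simp
  · intro k hk hne; simp [Polynomial.coeff_C_mul, Polynomial.coeff_X_pow, Ne.symm hne]
  · intro h; exact absurd (Finset.mem_Icc.2 ⟨le_refl 1, hp⟩) h

lemma Mpoly_eval (t : ℝ) (n : ℕ) (hmod : n % 2 = 0) :
    ((Mpoly n).map (Int.castRingHom ℝ)).eval t
      = ∑ k ∈ Finset.Icc 1 (n/2), (mcount (n/2) k : ℝ) * t ^ k := by
  unfold Mpoly
  rw [if_pos hmod]
  rw [Polynomial.map_sum, Polynomial.eval_finset_sum]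
  refine Finset.sum_congr rfl fun k _ => ?_
  simp [Polynomial.map_mul, Polynomial.map_pow]

lemma Mpoly_odd (n : ℕ) (hmod : n % 2 = 1) : Mpoly n = 0 := by
  unfold Mpoly; rw [if_neg (by omega)]

lemma coeff_zero_prod {ι : Type*} (s : Finset ι) (f : ι → Polynomial ℤ) (hne : s.Nonempty)
    (h0 : ∀ i ∈ s, (f i).coeff 0 = 0) : (∏ i ∈ s, f i).coeff 0 = 0 := by
  obtain ⟨a, ha⟩ := hne
  rw [← Finset.mul_prod_erase s f ha, Polynomial.mul_coeff_zero, h0 a ha, zero_mul]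

lemma coeff_one_prod {ι : Type*} (s : Finset ι) (f : ι → Polynomial ℤ) {a b : ι}
    (ha : a ∈ s) (hb : b ∈ s) (hab : a ≠ b)
    (h0 : ∀ i ∈ s, (f i).coeff 0 = 0) : (∏ i ∈ s, f i).coeff 1 = 0 := by
  rw [← Finset.mul_prod_erase s f ha]
  have h1 : (∏ i ∈ s.erase a, f i).coeff 0 = 0 :=
    coeff_zero_prod _ _ ⟨b, Finset.mem_erase.2 ⟨hab.symm, hb⟩⟩
      fun i hi => h0 i (Finset.mem_of_mem_erase hi)
  rw [show (1:ℕ) = 0 + 1 from rfl, Polynomial.coeff_mul]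
  rw [Finset.Nat.sum_antidiagonal_succ']
  simp [h0 a ha, h1, Finset.Nat.sum_antidiagonal_succ]

lemma classes_top (n : ℕ) (hn : 0 < n) :
    Setoid.classes (⊤ : Setoid (Fin n)) = {Set.univ} := by
  ext s
  constructor
  · rintro ⟨y, rfl⟩
    simp only [Set.mem_singleton_iff]
    ext x; simp [Setoid.top_def]
  · rintro rfl
    refine ⟨⟨0, hn⟩, ?_⟩
    ext x; simp

lemma ne_top_of_class_ne_univ {n : ℕ} {S : Setoid (Fin n)} (hS : S ≠ ⊤) {B : Set (Fin n)}
    (hB : B ∈ Setoid.classes S) : B ⊂ Set.univ := by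
  rw [Set.ssubset_univ_iff]
  rintro rfl
  obtain ⟨y, hy⟩ := hB
  apply hS
  rw [Setoid.eq_top_iff]
  intro u v
  have hu : S.r u y := by have : u ∈ (Set.univ : Set (Fin n)) := trivial; rwa [hy] at this
  have hv : S.r v y := by have : v ∈ (Set.univ : Set (Fin n)) := trivial; rwa [hy] at this
  exact S.trans' hu (S.symm' hv)

lemma exists_two_classes {n : ℕ} {S : Setoid (Fin n)} (hS : S ≠ ⊤) :
    ∃ B C : Set (Fin n), B ∈ Setoid.classes S ∧ C ∈ Setoid.classes S ∧ B ≠ C := by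
  have : ¬ ∀ x y, S.r x y := fun h => hS (Setoid.eq_top_iff.2 h)
  push_neg at this
  obtain ⟨a, b, hab⟩ := this
  refine ⟨{x | S.r x a}, {x | S.r x b}, Setoid.mem_classes S a, Setoid.mem_classes S b, ?_⟩
  intro h
  have ha : a ∈ {x | S.r x a} := S.refl' a
  rw [h] at ha
  exact hab ha

lemma class_nonempty {n : ℕ} {S : Setoid (Fin n)} {B : Set (Fin n)}
    (hB : B ∈ Setoid.classes S) : B.Nonempty := by
  obtain ⟨y, rfl⟩ := hB; exact ⟨y, S.refl' y⟩

lemma class_ncard_pos {n : ℕ} {S : Setoid (Fin n)} {B : Set (Fin n)}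
    (hB : B ∈ Setoid.classes S) : 0 < B.ncard :=
  (Set.ncard_pos (Set.toFinite B)).2 (class_nonempty hB)

lemma class_ncard_lt {n : ℕ} {S : Setoid (Fin n)} (hS : S ≠ ⊤) {B : Set (Fin n)}
    (hB : B ∈ Setoid.classes S) : B.ncard < n := by
  have := Set.ncard_lt_ncard (ne_top_of_class_ne_univ hS hB) (Set.toFinite _)
  simpa [Set.ncard_univ] using this

lemma momcum_extract {n : ℕ} (hn : 0 < n) (momv : ℕ → ℝ) (κv : ℕ → ℝ)
    (h : MomCum momv κv) :
    momv n = κv n + ∑ S ∈ ((Set.toFinite {S : Setoid (Fin n) | IsNC S}).toFinset.erase ⊤),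
      ∏ B ∈ (Set.toFinite (Setoid.classes S)).toFinset, κv B.ncard := by
  have hfin := Set.toFinite {S : Setoid (Fin n) | IsNC S}
  have hTop : (⊤ : Setoid (Fin n)) ∈ hfin.toFinset := by
    simp only [Set.Finite.mem_toFinset, Set.mem_setOf_eq]
    intro a b c d _ _ _ _ _; trivial
  have hmc := h n hn
  rw [← hfin.coe_toFinset, finsum_mem_coe_finset] at hmc
  rw [← Finset.add_sum_erase _ _ hTop] at hmc
  have htopterm : (∏ᶠ B ∈ Setoid.classes (⊤ : Setoid (Fin n)), κv B.ncard) = κv n := by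
    rw [classes_top n hn, finprod_mem_singleton, Set.ncard_univ]
    simp
  rw [htopterm] at hmc
  rw [hmc]
  congr 1
  refine Finset.sum_congr rfl fun S _ => ?_
  rw [← (Set.toFinite (Setoid.classes S)).coe_toFinset, finprod_mem_coe_finset]
  refine Finset.prod_congr ?_ fun _ _ => rfl
  ext B
  simp [Set.Finite.mem_toFinset]

lemma cum_poly (mom κ : ℝ → ℕ → ℝ)
    (hmomOdd : ∀ t : ℝ, ∀ n : ℕ, 0 < n → mom t (2*n - 1) = 0)
    (hmomEven : ∀ t : ℝ, ∀ n : ℕ, 0 < n →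
      mom t (2*n) = ∑ k ∈ Finset.Icc 1 n, (mcount n k : ℝ) * t ^ k)
    (hκ : ∀ t : ℝ, 0 < t → MomCum (mom t) (κ t)) :
    ∀ n : ℕ, 0 < n → ∃ P : Polynomial ℤ, P.coeff 0 = 0 ∧ P.coeff 1 = (Mpoly n).coeff 1 ∧
      ∀ t : ℝ, 0 < t → κ t n = (P.map (Int.castRingHom ℝ)).eval t := by
  have hmomP : ∀ t : ℝ, ∀ n : ℕ, 0 < n →
      mom t n = ((Mpoly n).map (Int.castRingHom ℝ)).eval t := by
    intro t n hn
    rcases Nat.even_or_odd n with h | h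
    · obtain ⟨m, rfl⟩ := h
      have hm : 0 < m := by omega
      have h2 : m + m = 2*m := by ring
      have h3 : (2*m)/2 = m := by omega
      rw [h2, hmomEven t m hm, Mpoly_eval t (2*m) (by omega), h3]
    · obtain ⟨m, rfl⟩ := h
      have := hmomOdd t (m+1) (by omega)
      rw [show 2*(m+1)-1 = 2*m+1 from by omega] at this
      rw [this, Mpoly_odd (2*m+1) (by omega)]
      simp
  intro n
  induction n using Nat.strong_induction_on with
  | _ n IH =>
  intro hn
  have Hex : ∀ m : ℕ, ∃ P : Polynomial ℤ, m < n → 0 < m → P.coeff 0 = 0 ∧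
      ∀ t : ℝ, 0 < t → κ t m = (P.map (Int.castRingHom ℝ)).eval t := by
    intro m
    by_cases h : m < n ∧ 0 < m
    · obtain ⟨P, h1, _, h3⟩ := IH m h.1 h.2
      exact ⟨P, fun _ _ => ⟨h1, h3⟩⟩
    · exact ⟨0, fun h1 h2 => absurd ⟨h1, h2⟩ h⟩
  choose g hg using Hex
  have hfin := Set.toFinite {S : Setoid (Fin n) | IsNC S}
  set T : Finset (Setoid (Fin n)) := hfin.toFinset.erase ⊤ with hT
  have hblock : ∀ S ∈ T, ∀ B ∈ (Set.toFinite (Setoid.classes S)).toFinset,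
      (g B.ncard).coeff 0 = 0 ∧
      ∀ t : ℝ, 0 < t → κ t B.ncard = ((g B.ncard).map (Int.castRingHom ℝ)).eval t := by
    intro S hS B hB
    rw [Set.Finite.mem_toFinset] at hB
    have hSne : S ≠ ⊤ := (Finset.mem_erase.1 hS).1
    exact hg B.ncard (class_ncard_lt hSne hB) (class_ncard_pos hB)
  have htwo : ∀ S ∈ T, ∃ B C, B ∈ (Set.toFinite (Setoid.classes S)).toFinset ∧
      C ∈ (Set.toFinite (Setoid.classes S)).toFinset ∧ B ≠ C := by
    intro S hS
    obtain ⟨B, C, hB, hC, hBC⟩ := exists_two_classes (Finset.mem_erase.1 hS).1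
    exact ⟨B, C, (Set.Finite.mem_toFinset _).2 hB, (Set.Finite.mem_toFinset _).2 hC, hBC⟩
  refine ⟨Mpoly n - ∑ S ∈ T, ∏ B ∈ (Set.toFinite (Setoid.classes S)).toFinset, g B.ncard,
    ?_, ?_, ?_⟩
  · rw [Polynomial.coeff_sub, Mpoly_coeff_zero, Polynomial.finset_sum_coeff]
    rw [Finset.sum_eq_zero, sub_zero]
    intro S hS
    obtain ⟨B, C, hB, hC, hBC⟩ := htwo S hS
    exact coeff_zero_prod _ _ ⟨B, hB⟩ (fun i hi => (hblock S hS i hi).1)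
  · rw [Polynomial.coeff_sub, Polynomial.finset_sum_coeff]
    rw [Finset.sum_eq_zero, sub_zero]
    intro S hS
    obtain ⟨B, C, hB, hC, hBC⟩ := htwo S hS
    exact coeff_one_prod _ _ hB hC hBC (fun i hi => (hblock S hS i hi).1)
  · intro t ht
    have key := momcum_extract hn (mom t) (κ t) (hκ t ht)
    set φ : Polynomial ℤ →+* ℝ :=
      (Polynomial.evalRingHom t).comp (Polynomial.mapRingHom (Int.castRingHom ℝ)) with hφ
    have hφ' : ∀ Q : Polynomial ℤ, φ Q = (Q.map (Int.castRingHom ℝ)).eval t := fun Q => rfl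
    have hsum : ∀ S ∈ T, φ (∏ B ∈ (Set.toFinite (Setoid.classes S)).toFinset, g B.ncard)
        = ∏ B ∈ (Set.toFinite (Setoid.classes S)).toFinset, κ t B.ncard := by
      intro S hS
      rw [map_prod]
      exact Finset.prod_congr rfl fun B hB => ((hblock S hS B hB).2 t ht).symm
    rw [← hφ', map_sub, map_sum, Finset.sum_congr rfl hsum, hφ', ← hmomP t n hn, key]
    ring

end MeanderAux

open Filter in
/-- For `t > 0`, let `ν_t` be the symmetric functional with moments
`ν_t(X^{2n}) = Σ_{k=1}^n m^{(k)}_n t^k`.  For every `p ≥ 1` there is a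
polynomial `Q_p ∈ ℤ[t]` with `Q_p(0) = 0` and `Q_p'(0) = m^{(1)}_p` such that
`κ_{2p}(ν_t) = Q_p(t)` for all `t > 0`; consequently
`lim_{t→0⁺} κ_{2p}(ν_t)/t = m^{(1)}_p`. -/
theorem cumulants_of_nu_t_polynomial
    (mom : ℝ → ℕ → ℝ) (κ : ℝ → ℕ → ℝ)
    (hmom0 : ∀ t : ℝ, mom t 0 = 1)
    (hmomOdd : ∀ t : ℝ, ∀ n : ℕ, 0 < n → mom t (2*n - 1) = 0)
    (hmomEven : ∀ t : ℝ, ∀ n : ℕ, 0 < n →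
      mom t (2*n) = ∑ k ∈ Finset.Icc 1 n, (mcount n k : ℝ) * t ^ k)
    (hκ : ∀ t : ℝ, 0 < t → MomCum (mom t) (κ t)) :
    ∀ p : ℕ, 0 < p → ∃ Q : Polynomial ℤ,
      Q.coeff 0 = 0 ∧ Q.coeff 1 = (meanderNum p : ℤ) ∧
      (∀ t : ℝ, 0 < t → κ t (2*p) = (Q.map (Int.castRingHom ℝ)).eval t) ∧
      Tendsto (fun t : ℝ => κ t (2*p) / t)
        (nhdsWithin 0 (Set.Ioi 0)) (nhds (meanderNum p : ℝ)) := by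
  intro p hp
  obtain ⟨P, h0, h1, heval⟩ := cum_poly mom κ hmomOdd hmomEven hκ (2*p) (by omega)
  have h1' : P.coeff 1 = (meanderNum p : ℤ) := by
    rw [h1, Mpoly_coeff_one p hp]; rfl
  refine ⟨P, h0, h1', heval, ?_⟩
  set Pm : Polynomial ℝ := P.map (Int.castRingHom ℝ) with hPmdef
  have hPm0 : Pm.coeff 0 = 0 := by simp [hPmdef, Polynomial.coeff_map, h0]
  have hPm1 : Pm.coeff 1 = (meanderNum p : ℝ) := by
    simp [hPmdef, Polynomial.coeff_map, h1']
  have hfac : ∀ t : ℝ, Pm.eval t = Pm.divX.eval t * t := by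
    intro t
    conv_lhs => rw [← Polynomial.divX_mul_X_add Pm]
    simp [hPm0]
  have h00 : Pm.divX.eval 0 = (meanderNum p : ℝ) := by
    rw [← Polynomial.coeff_zero_eq_eval_zero, Polynomial.coeff_divX]
    exact hPm1
  have hcont : Tendsto (fun t : ℝ => Pm.divX.eval t)
      (nhdsWithin 0 (Set.Ioi 0)) (nhds (meanderNum p : ℝ)) := by
    have := (Polynomial.continuous Pm.divX).continuousWithinAt
      (s := Set.Ioi (0:ℝ)) (x := (0:ℝ))
    rw [ContinuousWithinAt] at this
    rwa [h00] at this
  refine hcont.congr' ?_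
  filter_upwards [self_mem_nhdsWithin] with t ht
  rw [heval t ht, hfac t, mul_div_cancel_right₀ _ (ne_of_gt ht)]
end

section
/- Let (𝒜, φ) be a *-probability space containing a free family a_1,...,a_d of self-adjoint standard semicircular elements (κ_2(a_i) = 1, all other free cumulants 0). Let x = Σ_{i=1}^d a_i ⊗ a_i in (𝒜 ⊗ 𝒜, φ ⊗ φ). Then (φ⊗φ)(x^{2n−1}) = 0 and (φ⊗φ)(x^{2n}) = Σ_{π,ρ ∈ NC(n)} d^{#Orb(M_{π,ρ})} = Σ_{k=1}^n m^{(k)}_n d^k for every n ∈ ℕ. -/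
open scoped Classical

section Utils

variable {α : Type*}

lemma even_card_of_invol [DecidableEq α] :
    ∀ (k : ℕ) (s : Finset α), s.card = k → ∀ f : α → α, (∀ x ∈ s, f x ∈ s) →
      (∀ x ∈ s, f (f x) = x) → (∀ x ∈ s, f x ≠ x) → Even s.card := by
  intro k
  induction k using Nat.strong_induction_on with
  | _ k ih =>
    intro s hs f hmem hinv hne
    rcases s.eq_empty_or_nonempty with rfl | ⟨x, hx⟩
    · simp
    · have h1 : f x ∈ s := hmem x hx
      have hxx : f x ≠ x := hne x hx
      have hfx : f x ∈ s.erase x := Finset.mem_erase.2 ⟨hxx, h1⟩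
      set t := (s.erase x).erase (f x) with ht
      have htsub : ∀ y ∈ t, y ∈ s ∧ y ≠ x ∧ y ≠ f x := by
        intro y hy
        rw [ht] at hy
        simp only [Finset.mem_erase] at hy
        exact ⟨hy.2.2, hy.2.1, hy.1⟩
      have hmemt : ∀ y ∈ t, f y ∈ t := by
        intro y hy
        obtain ⟨hys, hyx, hyfx⟩ := htsub y hy
        rw [ht]
        simp only [Finset.mem_erase]
        refine ⟨?_, ?_, hmem y hys⟩
        · intro h; exact hyx (by rw [← hinv y hys, h, hinv x hx])
        · intro h; exact hyfx (by rw [← hinv y hys, h])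
      have hcard : t.card + 2 = s.card := by
        rw [ht, Finset.card_erase_of_mem hfx, Finset.card_erase_of_mem hx]
        have : 2 ≤ s.card := Finset.one_lt_card.2 ⟨f x, h1, x, hx, hxx⟩
        omega
      have hlt : t.card < k := by omega
      have := ih t.card hlt t rfl f hmemt
        (fun y hy => hinv y (htsub y hy).1) (fun y hy => hne y (htsub y hy).1)
      obtain ⟨c, hc⟩ := this
      exact ⟨c + 1, by omega⟩
      
lemma iterate_eqvGen (f : α → α) (m : ℕ) (x : α) :
    Relation.EqvGen (fun a b => f a = b) x (f^[m] x) := by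
  induction m with
  | zero => exact Relation.EqvGen.refl x
  | succ m ihm =>
    rw [Function.iterate_succ_apply']
    exact Relation.EqvGen.trans _ _ _ ihm (Relation.EqvGen.rel _ _ rfl)

lemma eqvGen_graph_iff (f g : α → α) (hgf : ∀ x, g (f x) = x)
    (x y : α) : Relation.EqvGen (fun a b => f a = b) x y ↔
      ∃ m : ℕ, f^[m] x = y ∨ f^[m] y = x := by
  have hinj : Function.Injective f := Function.LeftInverse.injective hgf
  constructor
  · intro h
    induction h with
    | rel a b hab => exact ⟨1, Or.inl hab⟩
    | refl a => exact ⟨0, Or.inl rfl⟩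
    | symm a b _ ih => obtain ⟨m, hm⟩ := ih; exact ⟨m, hm.symm⟩
    | trans a b c _ _ ih1 ih2 =>
      obtain ⟨m, hm⟩ := ih1
      obtain ⟨p, hp⟩ := ih2
      rcases hm with hm | hm <;> rcases hp with hp | hp
      · exact ⟨p + m, Or.inl (by rw [Function.iterate_add_apply, hm, hp])⟩
      · rcases le_total m p with h | h
        · refine ⟨p - m, Or.inr ?_⟩
          apply hinj.iterate m
          rw [← Function.iterate_add_apply, Nat.add_sub_cancel' h, hp, hm]
        · refine ⟨m - p, Or.inl ?_⟩
          apply hinj.iterate p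
          rw [← Function.iterate_add_apply, Nat.add_sub_cancel' h, hm, hp]
      · rcases le_total m p with h | h
        · refine ⟨p - m, Or.inl ?_⟩
          rw [← hm, ← Function.iterate_add_apply, Nat.sub_add_cancel h, hp]
        · refine ⟨m - p, Or.inr ?_⟩
          rw [← hp, ← Function.iterate_add_apply, Nat.sub_add_cancel h, hm]
      · exact ⟨m + p, Or.inr (by rw [Function.iterate_add_apply, hp, hm])⟩
  · rintro ⟨m, hm | hm⟩
    · rw [← hm]; exact iterate_eqvGen f m x
    · rw [← hm]; exact Relation.EqvGen.symm _ _ (iterate_eqvGen f m y)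

lemma eqvGen_graph_invariant (f g : α → α) (hgf : ∀ x, g (f x) = x)
    (s : Set α) (hf : ∀ x ∈ s, f x ∈ s) (hg : ∀ x ∈ s, g x ∈ s)
    {x y : α} (hx : x ∈ s) (h : Relation.EqvGen (fun a b => f a = b) x y) : y ∈ s := by
  rw [eqvGen_graph_iff f g hgf] at h
  have hfit : ∀ m : ℕ, ∀ z ∈ s, f^[m] z ∈ s := by
    intro m
    induction m with
    | zero => intro z hz; exact hz
    | succ m ihm => intro z hz; rw [Function.iterate_succ_apply]; exact ihm _ (hf z hz)
  have hgit : ∀ m : ℕ, ∀ z ∈ s, g^[m] z ∈ s := by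
    intro m
    induction m with
    | zero => intro z hz; exact hz
    | succ m ihm => intro z hz; rw [Function.iterate_succ_apply]; exact ihm _ (hg z hz)
  obtain ⟨m, hm | hm⟩ := h
  · rw [← hm]; exact hfit m x hx
  · have : g^[m] (f^[m] y) = y := Function.LeftInverse.iterate hgf m y
    rw [← this, hm]
    exact hgit m x hx

lemma eqvGen_matching (m : α → α) (minv : ∀ x, m (m x) = x)
    (r : α → α → Prop) (h1 : ∀ a b, r a b → b = m a) (h2 : ∀ a, r a (m a) ∨ r (m a) a)
    (x y : α) : Relation.EqvGen r x y ↔ y = x ∨ y = m x := by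
  constructor
  · intro h
    induction h with
    | rel a b hab => exact Or.inr (h1 a b hab)
    | refl a => exact Or.inl rfl
    | symm a b _ ih =>
      rcases ih with h | h
      · exact Or.inl h.symm
      · exact Or.inr (by rw [h, minv])
    | trans a b c _ _ ih1 ih2 =>
      rcases ih1 with h1 | h1 <;> rcases ih2 with h2 | h2
      · exact Or.inl (h2.trans h1)
      · exact Or.inr (by rw [h2, h1])
      · exact Or.inr (h2.trans h1)
      · exact Or.inl (by rw [h2, h1, minv])
  · rintro (h | h)
    · subst h; exact Relation.EqvGen.refl _
    · subst h
      rcases h2 x with h | h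
      · exact Relation.EqvGen.rel _ _ h
      · exact Relation.EqvGen.symm _ _ (Relation.EqvGen.rel _ _ h)

end Utils


section NextPrev

variable {n : ℕ} (S : Setoid (Fin n))

lemma mem_blockOf {i j : Fin n} : j ∈ blockOf S i ↔ S.r i j := by simp [blockOf]

lemma rel_nextP (i : Fin n) : S.r i (nextP S i) := by
  unfold nextP
  split_ifs with h
  · have := Finset.min'_mem _ h
    rw [Finset.mem_filter, mem_blockOf] at this
    exact this.1
  · have := Finset.min'_mem _ (blockOf_nonempty S i)
    rwa [mem_blockOf] at this

lemma rel_prevP (i : Fin n) : S.r i (prevP S i) := by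
  unfold prevP
  split_ifs with h
  · have := Finset.max'_mem _ h
    rw [Finset.mem_filter, mem_blockOf] at this
    exact this.1
  · have := Finset.max'_mem _ (blockOf_nonempty S i)
    rwa [mem_blockOf] at this

lemma nextP_le {i k : Fin n} (hr : S.r i k) (hik : i < k) :
    i < nextP S i ∧ nextP S i ≤ k := by
  have hne : ((blockOf S i).filter (fun j => i < j)).Nonempty :=
    ⟨k, by rw [Finset.mem_filter, mem_blockOf]; exact ⟨hr, hik⟩⟩
  rw [nextP, dif_pos hne]
  constructor
  · have := Finset.min'_mem _ hne
    rw [Finset.mem_filter] at this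
    exact this.2
  · exact Finset.min'_le _ _ (by rw [Finset.mem_filter, mem_blockOf]; exact ⟨hr, hik⟩)

lemma nextP_max {i : Fin n} (h : ∀ k, S.r i k → ¬ i < k) :
    ∀ k, S.r i k → nextP S i ≤ k := by
  have hne : ¬ ((blockOf S i).filter (fun j => i < j)).Nonempty := by
    rintro ⟨k, hk⟩
    rw [Finset.mem_filter, mem_blockOf] at hk
    exact h k hk.1 hk.2
  rw [nextP, dif_neg hne]
  intro k hk
  exact Finset.min'_le _ _ (by rw [mem_blockOf]; exact hk)

lemma prevP_ge {i k : Fin n} (hr : S.r i k) (hik : k < i) :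
    prevP S i < i ∧ k ≤ prevP S i := by
  have hne : ((blockOf S i).filter (fun j => j < i)).Nonempty :=
    ⟨k, by rw [Finset.mem_filter, mem_blockOf]; exact ⟨hr, hik⟩⟩
  rw [prevP, dif_pos hne]
  constructor
  · have := Finset.max'_mem _ hne
    rw [Finset.mem_filter] at this
    exact this.2
  · exact Finset.le_max' _ _ (by rw [Finset.mem_filter, mem_blockOf]; exact ⟨hr, hik⟩)

lemma prevP_min {i : Fin n} (h : ∀ k, S.r i k → ¬ k < i) :
    ∀ k, S.r i k → k ≤ prevP S i := by
  have hne : ¬ ((blockOf S i).filter (fun j => j < i)).Nonempty := by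
    rintro ⟨k, hk⟩
    rw [Finset.mem_filter, mem_blockOf] at hk
    exact h k hk.1 hk.2
  rw [prevP, dif_neg hne]
  intro k hk
  exact Finset.le_max' _ _ (by rw [mem_blockOf]; exact hk)

lemma nextP_eq_of_lt {i v : Fin n} (hr : S.r i v) (hlt : i < v)
    (hmin : ∀ k, S.r i k → i < k → v ≤ k) : nextP S i = v := by
  have h1 := nextP_le S hr hlt
  exact le_antisymm h1.2 (hmin _ (rel_nextP S i) h1.1)

lemma nextP_eq_of_bot {i v : Fin n} (hr : S.r i v) (hnone : ∀ k, S.r i k → ¬ i < k)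
    (hmin : ∀ k, S.r i k → v ≤ k) : nextP S i = v :=
  le_antisymm (nextP_max S hnone v hr) (hmin _ (rel_nextP S i))

lemma prevP_eq_of_gt {i v : Fin n} (hr : S.r i v) (hlt : v < i)
    (hmax : ∀ k, S.r i k → k < i → k ≤ v) : prevP S i = v := by
  have h1 := prevP_ge S hr hlt
  exact le_antisymm (hmax _ (rel_prevP S i) h1.1) h1.2

lemma prevP_eq_of_top {i v : Fin n} (hr : S.r i v) (hnone : ∀ k, S.r i k → ¬ k < i)
    (hmax : ∀ k, S.r i k → k ≤ v) : prevP S i = v :=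
  le_antisymm (hmax _ (rel_prevP S i)) (prevP_min S hnone v hr)

lemma prevP_nextP (i : Fin n) : prevP S (nextP S i) = i := by
  set v := nextP S i with hvdef
  have hv : S.r i v := rel_nextP S i
  have hrel : ∀ k, S.r v k ↔ S.r i k := fun k =>
    ⟨fun h => S.iseqv.trans hv h, fun h => S.iseqv.trans (S.iseqv.symm hv) h⟩
  by_cases h : ∃ k, S.r i k ∧ i < k
  · obtain ⟨k0, hk0, hik0⟩ := h
    have hlt : i < v := (nextP_le S hk0 hik0).1
    refine prevP_eq_of_gt S ((hrel i).2 (S.iseqv.refl i)) hlt ?_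
    intro k hk hkv
    by_contra hik
    push_neg at hik
    exact absurd ((nextP_le S ((hrel k).1 hk) hik).2) (not_le.2 hkv)
  · push_neg at h
    have hnone : ∀ k, S.r i k → ¬ i < k := fun k hk => by
      intro hlt; exact absurd hlt (by simpa using (h k hk))
    have hmin : ∀ k, S.r i k → v ≤ k := nextP_max S hnone
    refine prevP_eq_of_top S ((hrel i).2 (S.iseqv.refl i)) ?_ ?_
    · intro k hk hkv
      exact absurd (hmin k ((hrel k).1 hk)) (not_le.2 hkv)
    · intro k hk
      have := (hrel k).1 hk
      by_contra hik
      push_neg at hik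
      exact hnone k this hik

lemma nextP_prevP (i : Fin n) : nextP S (prevP S i) = i := by
  set v := prevP S i with hvdef
  have hv : S.r i v := rel_prevP S i
  have hrel : ∀ k, S.r v k ↔ S.r i k := fun k =>
    ⟨fun h => S.iseqv.trans hv h, fun h => S.iseqv.trans (S.iseqv.symm hv) h⟩
  by_cases h : ∃ k, S.r i k ∧ k < i
  · obtain ⟨k0, hk0, hik0⟩ := h
    have hlt : v < i := (prevP_ge S hk0 hik0).1
    refine nextP_eq_of_lt S ((hrel i).2 (S.iseqv.refl i)) hlt ?_
    intro k hk hkv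
    by_contra hik
    push_neg at hik
    exact absurd ((prevP_ge S ((hrel k).1 hk) hik).2) (not_le.2 hkv)
  · push_neg at h
    have hnone : ∀ k, S.r i k → ¬ k < i := fun k hk => by
      intro hlt; exact absurd hlt (by simpa using (h k hk))
    have hmax : ∀ k, S.r i k → k ≤ prevP S i := prevP_min S hnone
    refine nextP_eq_of_bot S ((hrel i).2 (S.iseqv.refl i)) ?_ ?_
    · intro k hk hkv
      exact absurd (hmax k ((hrel k).1 hk)) (not_le.2 hkv)
    · intro k hk
      have := (hrel k).1 hk
      by_contra hik
      push_neg at hik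
      exact hnone k this hik

lemma eqvGen_nextP_of_rel : ∀ g : ℕ, ∀ i j : Fin n, j.val - i.val = g → i ≤ j → S.r i j →
    Relation.EqvGen (fun a b => nextP S a = b) i j := by
  intro g
  induction g using Nat.strong_induction_on with
  | _ g ih =>
    intro i j hg hij hr
    rcases eq_or_lt_of_le hij with rfl | hlt
    · exact Relation.EqvGen.refl i
    · set v := nextP S i with hv
      have h1 := nextP_le S hr hlt
      have hgen : Relation.EqvGen (fun a b => nextP S a = b) i v := Relation.EqvGen.rel _ _ rfl
      rcases eq_or_lt_of_le h1.2 with heq | hvj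
      · rwa [show v = j from hv.trans heq] at hgen
      · have hrv : S.r v j := S.iseqv.trans (S.iseqv.symm (rel_nextP S i)) hr
        have : j.val - v.val < g := by
          have := h1.1
          omega
        exact Relation.EqvGen.trans _ _ _ hgen (ih _ this v j rfl (le_of_lt hvj) hrv)

lemma orbitSetoid_nextP : orbitSetoid (nextP S) = S := by
  apply le_antisymm
  · exact Setoid.eqvGen_le fun a b h => h ▸ rel_nextP S a
  · intro x y hxy
    show Relation.EqvGen _ x y
    rcases le_total x y with h | h
    · exact eqvGen_nextP_of_rel S _ x y rfl h hxy
    · exact Relation.EqvGen.symm _ _ (eqvGen_nextP_of_rel S _ y x rfl h (S.iseqv.symm hxy))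

lemma nextP_injective : Function.Injective (nextP S) :=
  Function.LeftInverse.injective (prevP_nextP S)

end NextPrev

section Arch

variable {n : ℕ}

lemma dEven_val (j : Fin n) : (dEven j).val = 2 * j.val := rfl
lemma dOdd_val (j : Fin n) : (dOdd j).val = 2 * j.val + 1 := rfl

lemma dEven_injective : Function.Injective (dEven (n := n)) := by
  intro a b h
  apply Fin.ext
  have := congrArg Fin.val h
  rw [dEven_val, dEven_val] at this
  omega

lemma dOdd_injective : Function.Injective (dOdd (n := n)) := by
  intro a b h
  apply Fin.ext
  have := congrArg Fin.val h
  rw [dOdd_val, dOdd_val] at this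
  omega

lemma parity_cases (x : Fin (2*n)) :
    (∃ j : Fin n, x = dEven j) ∨ (∃ j : Fin n, x = dOdd j) := by
  have hx := x.isLt
  rcases Nat.even_or_odd x.val with ⟨c, hc⟩ | ⟨c, hc⟩
  · exact Or.inl ⟨⟨c, by omega⟩, Fin.ext (show x.val = 2 * c by omega)⟩
  · exact Or.inr ⟨⟨c, by omega⟩, Fin.ext (show x.val = 2 * c + 1 by omega)⟩

lemma meanderMap_dOdd (π ρ : Setoid (Fin n)) (j : Fin n) :
    meanderMap π ρ (dOdd j) = dEven (nextP ρ j) := by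
  have hmod : ¬ ((dOdd j : Fin (2*n)).val % 2 = 0) := by
    show ¬ ((2 * j.val + 1) % 2 = 0); omega
  rw [meanderMap, if_neg hmod]
  congr 2
  apply Fin.ext
  show (2 * j.val + 1) / 2 = j.val
  omega

lemma meanderMap_dEven (π ρ : Setoid (Fin n)) (j : Fin n) :
    meanderMap π ρ (dEven j) = dOdd (prevP π j) := by
  have hmod : ((dEven j : Fin (2*n)).val % 2 = 0) := by
    show ((2 * j.val) % 2 = 0); omega
  rw [meanderMap, if_pos hmod]
  congr 2
  apply Fin.ext
  show (2 * j.val) / 2 = j.val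
  omega

/-- The matching underlying `archSetoid S`. -/
noncomputable def archM (S : Setoid (Fin n)) (x : Fin (2*n)) : Fin (2*n) :=
  meanderMap S S x

lemma archM_dOdd (S : Setoid (Fin n)) (j : Fin n) :
    archM S (dOdd j) = dEven (nextP S j) := meanderMap_dOdd S S j

lemma archM_dEven (S : Setoid (Fin n)) (j : Fin n) :
    archM S (dEven j) = dOdd (prevP S j) := meanderMap_dEven S S j

lemma archM_archM (S : Setoid (Fin n)) (x : Fin (2*n)) : archM S (archM S x) = x := by
  rcases parity_cases x with ⟨j, rfl⟩ | ⟨j, rfl⟩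
  · rw [archM_dEven, archM_dOdd, nextP_prevP]
  · rw [archM_dOdd, archM_dEven, prevP_nextP]

lemma archM_ne (S : Setoid (Fin n)) (x : Fin (2*n)) : archM S x ≠ x := by
  rcases parity_cases x with ⟨j, rfl⟩ | ⟨j, rfl⟩
  · rw [archM_dEven]
    intro h
    have := congrArg Fin.val h
    rw [dOdd_val, dEven_val] at this
    omega
  · rw [archM_dOdd]
    intro h
    have := congrArg Fin.val h
    rw [dOdd_val, dEven_val] at this
    omega

lemma archSetoid_rel (S : Setoid (Fin n)) (x y : Fin (2*n)) :
    (archSetoid S).r x y ↔ y = x ∨ y = archM S x := by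
  refine eqvGen_matching (archM S) (archM_archM S) _ ?_ ?_ x y
  · rintro a b ⟨j, rfl, rfl⟩
    exact (archM_dOdd S j).symm
  · intro a
    rcases parity_cases a with ⟨j, rfl⟩ | ⟨j, rfl⟩
    · refine Or.inr ⟨prevP S j, (archM_dEven S j).symm ▸ rfl, ?_⟩
      rw [nextP_prevP]
    · exact Or.inl ⟨j, rfl, archM_dOdd S j⟩

lemma isPairing_arch (S : Setoid (Fin n)) : IsPairing (archSetoid S) := by
  intro x
  refine ⟨archM S x, archM_ne S x, (archSetoid_rel S x _).2 (Or.inr rfl), ?_⟩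
  intro z hz
  rw [archSetoid_rel] at hz
  exact hz

lemma orbit_meander (π ρ : Setoid (Fin n)) :
    orbitSetoid (meanderMap π ρ) = archSetoid π ⊔ archSetoid ρ := by
  apply le_antisymm
  · apply Setoid.eqvGen_le
    intro x y h
    rcases parity_cases x with ⟨j, rfl⟩ | ⟨j, rfl⟩
    · rw [meanderMap_dEven] at h
      subst h
      have h1 : (archSetoid π).r (dOdd (prevP π j)) (dEven j) := by
        rw [archSetoid_rel, archM_dOdd, nextP_prevP]
        exact Or.inr rfl
      exact (archSetoid π ⊔ archSetoid ρ).iseqv.symm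
        (Setoid.le_def.mp le_sup_left h1)
    · rw [meanderMap_dOdd] at h
      subst h
      have h1 : (archSetoid ρ).r (dOdd j) (dEven (nextP ρ j)) := by
        rw [archSetoid_rel, archM_dOdd]
        exact Or.inr rfl
      exact Setoid.le_def.mp le_sup_right h1
  · apply sup_le
    · apply Setoid.eqvGen_le
      rintro x y ⟨j, rfl, rfl⟩
      have h : meanderMap π ρ (dEven (nextP π j)) = dOdd j := by
        rw [meanderMap_dEven, prevP_nextP]
      exact Relation.EqvGen.symm _ _ (Relation.EqvGen.rel _ _ h)
    · apply Setoid.eqvGen_le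
      rintro x y ⟨j, rfl, rfl⟩
      exact Relation.EqvGen.rel _ _ (meanderMap_dOdd π ρ j)

lemma arch_injective : Function.Injective (archSetoid (n := n)) := by
  intro π τ h
  have hM : ∀ x, archM π x = archM τ x := by
    intro x
    have h1 : (archSetoid τ).r x (archM π x) := by
      rw [← h, archSetoid_rel]
      exact Or.inr rfl
    rw [archSetoid_rel] at h1
    rcases h1 with h1 | h1
    · exact absurd h1 (archM_ne π x)
    · exact h1
  have hnext : nextP π = nextP τ := by
    funext j
    have := hM (dOdd j)
    rw [archM_dOdd, archM_dOdd] at this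
    exact dEven_injective this
  rw [← orbitSetoid_nextP π, ← orbitSetoid_nextP τ, hnext]

end Arch

section NCCore

lemma nc_sandwich {m : ℕ} {S : Setoid (Fin m)} (hS : IsNC S) {j k v w : Fin m}
    (hjk : j < k) (hkv : k < v) (hjv : S.r j v) (hkw : S.r k w) (hnb : ¬ S.r j k) :
    j < w ∧ w < v := by
  have hwj : w ≠ j := by rintro rfl; exact hnb (S.iseqv.symm hkw)
  have hwv : w ≠ v := by
    rintro rfl
    exact hnb (S.iseqv.trans hjv (S.iseqv.symm hkw))
  constructor
  · rcases lt_trichotomy j w with h | h | h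
    · exact h
    · exact absurd h.symm hwj
    · have h1 : S.r w j := hS w j k v h hjk hkv (S.iseqv.symm hkw) hjv
      exact absurd (S.iseqv.trans (S.iseqv.symm h1) (S.iseqv.symm hkw)) hnb
  · rcases lt_trichotomy w v with h | h | h
    · exact h
    · exact absurd h hwv
    · exact absurd (hS j k v w hjk hkv h hjv hkw) hnb

lemma nc_next_inv {m : ℕ} {S : Setoid (Fin m)} (hS : IsNC S) {j k : Fin m}
    (h1 : j < k) (h2 : k < nextP S j) :
    (j < nextP S k ∧ nextP S k < nextP S j) ∧ (j < prevP S k ∧ prevP S k < nextP S j) := by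
  have hnb : ¬ S.r j k := fun h => absurd (nextP_le S h h1).2 (not_le.2 h2)
  exact ⟨nc_sandwich hS h1 h2 (rel_nextP S j) (rel_nextP S k) hnb,
         nc_sandwich hS h1 h2 (rel_nextP S j) (rel_prevP S k) hnb⟩

lemma nc_closed_inv {m : ℕ} {S : Setoid (Fin m)} (hS : IsNC S) {j : Fin m}
    (hj : nextP S j < j) (k : Fin m) (h1 : nextP S j ≤ k) (h2 : k ≤ j) :
    (nextP S j ≤ nextP S k ∧ nextP S k ≤ j) ∧ (nextP S j ≤ prevP S k ∧ prevP S k ≤ j) := by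
  by_cases hrel : S.r j k
  · have hsub : ∀ l, S.r j l → nextP S j ≤ l ∧ l ≤ j := by
      intro l hl
      constructor
      · refine nextP_max S ?_ l hl
        intro k' hk' hlt
        exact absurd (nextP_le S hk' hlt).1 (not_lt.2 (le_of_lt hj))
      · by_contra h
        push_neg at h
        exact absurd (nextP_le S hl h).1 (not_lt.2 (le_of_lt hj))
    exact ⟨hsub _ (S.iseqv.trans hrel (rel_nextP S k)),
           hsub _ (S.iseqv.trans hrel (rel_prevP S k))⟩
  · have hk1 : nextP S j < k := by
      rcases eq_or_lt_of_le h1 with h | h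
      · exact absurd (h ▸ rel_nextP S j) hrel
      · exact h
    have hk2 : k < j := by
      rcases eq_or_lt_of_le h2 with h | h
      · exact absurd (h ▸ S.iseqv.refl j) hrel
      · exact h
    have hnb : ¬ S.r (nextP S j) k := fun h =>
      hrel (S.iseqv.trans (rel_nextP S j) h)
    have hjv : S.r (nextP S j) j := S.iseqv.symm (rel_nextP S j)
    have r1 := nc_sandwich hS hk1 hk2 hjv (rel_nextP S k) hnb
    have r2 := nc_sandwich hS hk1 hk2 hjv (rel_prevP S k) hnb
    exact ⟨⟨le_of_lt r1.1, le_of_lt r1.2⟩, ⟨le_of_lt r2.1, le_of_lt r2.2⟩⟩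

lemma isNC_arch {n : ℕ} {S : Setoid (Fin n)} (hS : IsNC S) : IsNC (archSetoid S) := by
  intro a b c d hab hbc hcd hac hbd
  exfalso
  rw [archSetoid_rel] at hac hbd
  have hac' : c = archM S a := by
    rcases hac with h | h
    · exact absurd h (ne_of_gt (lt_trans hab hbc))
    · exact h
  have hbd' : d = archM S b := by
    rcases hbd with h | h
    · exact absurd h (ne_of_gt (lt_trans hbc hcd))
    · exact h
  subst hac'
  subst hbd'
  rcases parity_cases a with ⟨j, rfl⟩ | ⟨j, rfl⟩
  · -- a = dEven j, c = dOdd (prevP S j)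
    rw [archM_dEven] at hbc hcd
    have hnu : nextP S (prevP S j) = j := nextP_prevP S j
    rcases parity_cases b with ⟨k, rfl⟩ | ⟨k, rfl⟩
    · rw [archM_dEven] at hcd
      have H1 : 2 * j.val < 2 * k.val := Fin.lt_def.mp hab
      have H2 : 2 * k.val < 2 * (prevP S j).val + 1 := Fin.lt_def.mp hbc
      have H3 : 2 * (prevP S j).val + 1 < 2 * (prevP S k).val + 1 := Fin.lt_def.mp hcd
      have hj : nextP S (prevP S j) < prevP S j := by
        rw [hnu]; exact Fin.lt_def.mpr (by omega)
      have h1 : nextP S (prevP S j) ≤ k := by rw [hnu]; exact Fin.le_def.mpr (by omega)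
      have h2 : k ≤ prevP S j := Fin.le_def.mpr (by omega)
      have := Fin.le_def.mp ((nc_closed_inv hS hj k h1 h2).2.2)
      omega
    · rw [archM_dOdd] at hcd
      have H1 : 2 * j.val < 2 * k.val + 1 := Fin.lt_def.mp hab
      have H2 : 2 * k.val + 1 < 2 * (prevP S j).val + 1 := Fin.lt_def.mp hbc
      have H3 : 2 * (prevP S j).val + 1 < 2 * (nextP S k).val := Fin.lt_def.mp hcd
      have hj : nextP S (prevP S j) < prevP S j := by
        rw [hnu]; exact Fin.lt_def.mpr (by omega)
      have h1 : nextP S (prevP S j) ≤ k := by rw [hnu]; exact Fin.le_def.mpr (by omega)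
      have h2 : k ≤ prevP S j := Fin.le_def.mpr (by omega)
      have := Fin.le_def.mp ((nc_closed_inv hS hj k h1 h2).1.2)
      omega
  · -- a = dOdd j, c = dEven (nextP S j)
    rw [archM_dOdd] at hbc hcd
    rcases parity_cases b with ⟨k, rfl⟩ | ⟨k, rfl⟩
    · rw [archM_dEven] at hcd
      have H1 : 2 * j.val + 1 < 2 * k.val := Fin.lt_def.mp hab
      have H2 : 2 * k.val < 2 * (nextP S j).val := Fin.lt_def.mp hbc
      have H3 : 2 * (nextP S j).val < 2 * (prevP S k).val + 1 := Fin.lt_def.mp hcd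
      have h1 : j < k := Fin.lt_def.mpr (by omega)
      have h2 : k < nextP S j := Fin.lt_def.mpr (by omega)
      have := Fin.lt_def.mp ((nc_next_inv hS h1 h2).2.2)
      omega
    · rw [archM_dOdd] at hcd
      have H1 : 2 * j.val + 1 < 2 * k.val + 1 := Fin.lt_def.mp hab
      have H2 : 2 * k.val + 1 < 2 * (nextP S j).val := Fin.lt_def.mp hbc
      have H3 : 2 * (nextP S j).val < 2 * (nextP S k).val := Fin.lt_def.mp hcd
      have h1 : j < k := Fin.lt_def.mpr (by omega)
      have h2 : k < nextP S j := Fin.lt_def.mpr (by omega)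
      have := Fin.lt_def.mp ((nc_next_inv hS h1 h2).1.2)
      omega

end NCCore

section Back

noncomputable def partnerOf {m : ℕ} (T : Setoid (Fin m)) (x : Fin m) : Fin m :=
  if h : ∃ y, y ≠ x ∧ T.r x y ∧ ∀ z, T.r x z → z = x ∨ z = y then Classical.choose h else x

variable {m : ℕ} {T : Setoid (Fin m)}

lemma partnerOf_spec (hT : IsPairing T) (x : Fin m) :
    partnerOf T x ≠ x ∧ T.r x (partnerOf T x) ∧
      ∀ z, T.r x z → z = x ∨ z = partnerOf T x := by
  rw [partnerOf, dif_pos (hT x)]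
  exact Classical.choose_spec (hT x)

lemma partnerOf_ne (hT : IsPairing T) (x : Fin m) : partnerOf T x ≠ x :=
  (partnerOf_spec hT x).1

lemma rel_partnerOf (hT : IsPairing T) (x : Fin m) : T.r x (partnerOf T x) :=
  (partnerOf_spec hT x).2.1

lemma partnerOf_uniq (hT : IsPairing T) {x z : Fin m} (h : T.r x z) :
    z = x ∨ z = partnerOf T x :=
  (partnerOf_spec hT x).2.2 z h

lemma partnerOf_invol (hT : IsPairing T) (x : Fin m) :
    partnerOf T (partnerOf T x) = x := by
  have h := partnerOf_uniq hT (T.iseqv.symm (rel_partnerOf hT x))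
  rcases h with h | h
  · exact absurd h.symm (partnerOf_ne hT x)
  · exact h.symm

lemma rel_iff_partnerOf (hT : IsPairing T) (x y : Fin m) :
    T.r x y ↔ y = x ∨ y = partnerOf T x := by
  constructor
  · exact fun h => partnerOf_uniq hT h
  · intro h
    rcases h with h | h
    · rw [h]
    · rw [h]; exact rel_partnerOf hT x

lemma not_rel_interior (hT : IsPairing T) {x z : Fin m}
    (hzx : z ≠ x) (hzp : z ≠ partnerOf T x) : ¬ T.r x z := by
  intro h
  rcases partnerOf_uniq hT h with h | h
  · exact hzx h
  · exact hzp h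

/-- In a noncrossing pairing, the partner of any point has opposite parity. -/
lemma partner_parity (hNC : IsNC T) (hT : IsPairing T) (x : Fin m)
    (hlt : x < partnerOf T x) : (partnerOf T x).val % 2 ≠ x.val % 2 := by
  set y := partnerOf T x with hy
  have hrel : T.r x y := rel_partnerOf hT x
  -- the interior of (x,y) is closed under the partner map
  have hclosed : ∀ z ∈ Finset.Ioo x y, partnerOf T z ∈ Finset.Ioo x y := by
    intro z hz
    rw [Finset.mem_Ioo] at hz ⊢
    have hzx : z ≠ x := ne_of_gt hz.1
    have hzy : z ≠ y := ne_of_lt hz.2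
    have hnb : ¬ T.r x z := not_rel_interior hT hzx (hy ▸ hzy)
    exact nc_sandwich hNC hz.1 hz.2 hrel (rel_partnerOf hT z) hnb
  have hinv : ∀ z ∈ Finset.Ioo x y, partnerOf T (partnerOf T z) = z :=
    fun z _ => partnerOf_invol hT z
  have hne : ∀ z ∈ Finset.Ioo x y, partnerOf T z ≠ z := fun z _ => partnerOf_ne hT z
  have heven : Even (Finset.Ioo x y).card :=
    even_card_of_invol _ _ rfl _ hclosed hinv hne
  rw [Fin.card_Ioo] at heven
  obtain ⟨c, hc⟩ := heven
  have hxy : x.val < y.val := Fin.lt_def.mp hlt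
  omega

lemma partner_parity' (hNC : IsNC T) (hT : IsPairing T) (x : Fin m) :
    (partnerOf T x).val % 2 ≠ x.val % 2 := by
  rcases lt_trichotomy x (partnerOf T x) with h | h | h
  · exact partner_parity hNC hT x h
  · exact absurd h.symm (partnerOf_ne hT x)
  · have := partner_parity hNC hT (partnerOf T x) (by rwa [partnerOf_invol hT])
    rw [partnerOf_invol hT] at this
    exact Ne.symm this

end Back

section BackN

variable {n : ℕ}

noncomputable def backQ (T : Setoid (Fin (2*n))) (j : Fin n) : Fin n :=
  ⟨(partnerOf T (dOdd j)).val / 2, by have := (partnerOf T (dOdd j)).isLt; omega⟩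

noncomputable def backQinv (T : Setoid (Fin (2*n))) (j : Fin n) : Fin n :=
  ⟨(partnerOf T (dEven j)).val / 2, by have := (partnerOf T (dEven j)).isLt; omega⟩

noncomputable def backSetoid (T : Setoid (Fin (2*n))) : Setoid (Fin n) :=
  orbitSetoid (backQ T)

variable {T : Setoid (Fin (2*n))}

lemma partnerOf_dOdd (hNC : IsNC T) (hT : IsPairing T) (j : Fin n) :
    partnerOf T (dOdd j) = dEven (backQ T j) := by
  have hpar := partner_parity' hNC hT (dOdd j)
  rw [dOdd_val] at hpar
  apply Fin.ext
  rw [dEven_val]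
  show _ = 2 * ((partnerOf T (dOdd j)).val / 2)
  omega

lemma partnerOf_dEven (hNC : IsNC T) (hT : IsPairing T) (j : Fin n) :
    partnerOf T (dEven j) = dOdd (backQinv T j) := by
  have hpar := partner_parity' hNC hT (dEven j)
  rw [dEven_val] at hpar
  apply Fin.ext
  rw [dOdd_val]
  show _ = 2 * ((partnerOf T (dEven j)).val / 2) + 1
  omega

lemma backQinv_backQ (hNC : IsNC T) (hT : IsPairing T) (j : Fin n) :
    backQinv T (backQ T j) = j := by
  have h := partnerOf_invol hT (dOdd j)
  rw [partnerOf_dOdd hNC hT, partnerOf_dEven hNC hT] at h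
  exact dOdd_injective h

lemma backQ_backQinv (hNC : IsNC T) (hT : IsPairing T) (j : Fin n) :
    backQ T (backQinv T j) = j := by
  have h := partnerOf_invol hT (dEven j)
  rw [partnerOf_dEven hNC hT, partnerOf_dOdd hNC hT] at h
  exact dEven_injective h

/-- Open-interval invariance for the slot map of a noncrossing pairing. -/
lemma backQ_open_inv (hNC : IsNC T) (hT : IsPairing T) {j k : Fin n}
    (hj : j < backQ T j) (h1 : j < k) (h2 : k < backQ T j) :
    (j < backQ T k ∧ backQ T k < backQ T j) ∧
      (j < backQinv T k ∧ backQinv T k < backQ T j) := by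
  have hrel : T.r (dOdd j) (dEven (backQ T j)) := by
    rw [← partnerOf_dOdd hNC hT]; exact rel_partnerOf hT (dOdd j)
  have hxy : (dOdd j : Fin (2*n)) < dEven (backQ T j) :=
    Fin.lt_def.mpr (by rw [dOdd_val, dEven_val]; have := Fin.lt_def.mp hj; omega)
  constructor
  · -- z = dOdd k
    have hz1 : (dOdd j : Fin (2*n)) < dOdd k :=
      Fin.lt_def.mpr (by rw [dOdd_val, dOdd_val]; have := Fin.lt_def.mp h1; omega)
    have hz2 : (dOdd k : Fin (2*n)) < dEven (backQ T j) :=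
      Fin.lt_def.mpr (by rw [dOdd_val, dEven_val]; have := Fin.lt_def.mp h2; omega)
    have hnb : ¬ T.r (dOdd j) (dOdd k) :=
      not_rel_interior hT (ne_of_gt hz1) (by
        rw [partnerOf_dOdd hNC hT]; exact ne_of_lt hz2)
    have := nc_sandwich hNC hz1 hz2 hrel (rel_partnerOf hT (dOdd k)) hnb
    rw [partnerOf_dOdd hNC hT] at this
    constructor
    · exact Fin.lt_def.mpr (by
        have := Fin.lt_def.mp this.1; rw [dOdd_val, dEven_val] at this; omega)
    · exact Fin.lt_def.mpr (by
        have := Fin.lt_def.mp this.2; rw [dEven_val, dEven_val] at this; omega)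
  · -- z = dEven k
    have hz1 : (dOdd j : Fin (2*n)) < dEven k :=
      Fin.lt_def.mpr (by rw [dOdd_val, dEven_val]; have := Fin.lt_def.mp h1; omega)
    have hz2 : (dEven k : Fin (2*n)) < dEven (backQ T j) :=
      Fin.lt_def.mpr (by rw [dEven_val, dEven_val]; have := Fin.lt_def.mp h2; omega)
    have hnb : ¬ T.r (dOdd j) (dEven k) :=
      not_rel_interior hT (ne_of_gt hz1) (by
        rw [partnerOf_dOdd hNC hT]; exact ne_of_lt hz2)
    have := nc_sandwich hNC hz1 hz2 hrel (rel_partnerOf hT (dEven k)) hnb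
    rw [partnerOf_dEven hNC hT] at this
    constructor
    · exact Fin.lt_def.mpr (by
        have := Fin.lt_def.mp this.1; rw [dOdd_val, dOdd_val] at this; omega)
    · exact Fin.lt_def.mpr (by
        have := Fin.lt_def.mp this.2; rw [dOdd_val, dEven_val] at this; omega)

/-- Closed-interval invariance for the slot map of a noncrossing pairing. -/
lemma backQ_closed_inv (hNC : IsNC T) (hT : IsPairing T) {j : Fin n}
    (hj : backQ T j < j) (k : Fin n) (h1 : backQ T j ≤ k) (h2 : k ≤ j) :
    (backQ T j ≤ backQ T k ∧ backQ T k ≤ j) ∧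
      (backQ T j ≤ backQinv T k ∧ backQinv T k ≤ j) := by
  have hrel : T.r (dEven (backQ T j)) (dOdd j) := by
    rw [← partnerOf_dOdd hNC hT]
    exact T.iseqv.symm (rel_partnerOf hT (dOdd j))
  have hp : partnerOf T (dEven (backQ T j)) = dOdd j := by
    rw [← partnerOf_dOdd hNC hT, partnerOf_invol hT]
  constructor
  · rcases eq_or_lt_of_le h2 with rfl | hk2
    · exact ⟨le_refl _, le_of_lt hj⟩
    · -- k < j : use z = dOdd k interior to (dEven (backQ T j), dOdd j)
      have hz1 : (dEven (backQ T j) : Fin (2*n)) < dOdd k :=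
        Fin.lt_def.mpr (by rw [dOdd_val, dEven_val]; have := Fin.le_def.mp h1; omega)
      have hz2 : (dOdd k : Fin (2*n)) < dOdd j :=
        Fin.lt_def.mpr (by rw [dOdd_val, dOdd_val]; have := Fin.lt_def.mp hk2; omega)
      have hnb : ¬ T.r (dEven (backQ T j)) (dOdd k) :=
        not_rel_interior hT (ne_of_gt hz1) (by rw [hp]; exact ne_of_lt hz2)
      have := nc_sandwich hNC hz1 hz2 hrel (rel_partnerOf hT (dOdd k)) hnb
      rw [partnerOf_dOdd hNC hT] at this
      have e1 := Fin.lt_def.mp this.1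
      have e2 := Fin.lt_def.mp this.2
      rw [dEven_val, dEven_val] at e1
      rw [dEven_val, dOdd_val] at e2
      exact ⟨Fin.le_def.mpr (by omega), Fin.le_def.mpr (by omega)⟩
  · rcases eq_or_lt_of_le h1 with rfl | hk1
    · have h := backQinv_backQ hNC hT j
      rw [h]
      exact ⟨le_of_lt hj, le_refl j⟩
    · -- backQ T j < k : use z = dEven k
      have hz1 : (dEven (backQ T j) : Fin (2*n)) < dEven k :=
        Fin.lt_def.mpr (by rw [dEven_val, dEven_val]; have := Fin.lt_def.mp hk1; omega)
      have hz2 : (dEven k : Fin (2*n)) < dOdd j :=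
        Fin.lt_def.mpr (by rw [dOdd_val, dEven_val]; have := Fin.le_def.mp h2; omega)
      have hnb : ¬ T.r (dEven (backQ T j)) (dEven k) :=
        not_rel_interior hT (ne_of_gt hz1) (by rw [hp]; exact ne_of_lt hz2)
      have := nc_sandwich hNC hz1 hz2 hrel (rel_partnerOf hT (dEven k)) hnb
      rw [partnerOf_dEven hNC hT] at this
      have e1 := Fin.lt_def.mp this.1
      have e2 := Fin.lt_def.mp this.2
      rw [dEven_val, dOdd_val] at e1
      rw [dOdd_val, dOdd_val] at e2
      exact ⟨Fin.le_def.mpr (by omega), Fin.le_def.mpr (by omega)⟩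

end BackN

section Back2

variable {n : ℕ} {T : Setoid (Fin (2*n))}

lemma backSetoid_rel_invariant (hNC : IsNC T) (hT : IsPairing T)
    (s : Set (Fin n)) (h1 : ∀ x ∈ s, backQ T x ∈ s) (h2 : ∀ x ∈ s, backQinv T x ∈ s)
    {j k : Fin n} (hj : j ∈ s) (h : (backSetoid T).r j k) : k ∈ s :=
  eqvGen_graph_invariant (backQ T) (backQinv T) (backQinv_backQ hNC hT) s h1 h2 hj h

lemma backSetoid_rel_gen (j : Fin n) : (backSetoid T).r j (backQ T j) :=
  Relation.EqvGen.rel _ _ rfl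

lemma nextP_backSetoid (hNC : IsNC T) (hT : IsPairing T) (j : Fin n) :
    nextP (backSetoid T) j = backQ T j := by
  have hgen : (backSetoid T).r j (backQ T j) := backSetoid_rel_gen j
  rcases lt_trichotomy j (backQ T j) with hj | hj | hj
  · apply nextP_eq_of_lt _ hgen hj
    intro k hk hjk
    by_contra hlt
    push_neg at hlt
    have hjs : j ∈ {x : Fin n | j < x ∧ x < backQ T j} := by
      refine backSetoid_rel_invariant hNC hT _ ?_ ?_ (⟨hjk, hlt⟩ : _ ∧ _)
        ((backSetoid T).iseqv.symm hk)
      · exact fun x hx => (backQ_open_inv hNC hT hj hx.1 hx.2).1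
      · exact fun x hx => (backQ_open_inv hNC hT hj hx.1 hx.2).2
    exact lt_irrefl j hjs.1
  · have hQinv : backQinv T j = j := by
      conv_lhs => rw [hj]
      rw [backQinv_backQ hNC hT]
    have hsingle : ∀ k, (backSetoid T).r j k → k = j := by
      intro k hk
      refine backSetoid_rel_invariant hNC hT {x : Fin n | x = j} ?_ ?_ rfl hk
      · intro x hx
        rw [Set.mem_setOf_eq] at hx ⊢
        rw [hx, ← hj]
      · intro x hx
        rw [Set.mem_setOf_eq] at hx ⊢
        rw [hx, hQinv]
    refine nextP_eq_of_bot _ hgen ?_ ?_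
    · intro k hk
      rw [hsingle k hk]
      exact lt_irrefl j
    · intro k hk
      rw [hsingle k hk, ← hj]
  · have hbound : ∀ k, (backSetoid T).r j k → backQ T j ≤ k ∧ k ≤ j := by
      intro k hk
      refine backSetoid_rel_invariant hNC hT {x : Fin n | backQ T j ≤ x ∧ x ≤ j} ?_ ?_
        (⟨le_of_lt hj, le_refl j⟩ : _ ∧ _) hk
      · exact fun x hx => (backQ_closed_inv hNC hT hj x hx.1 hx.2).1
      · exact fun x hx => (backQ_closed_inv hNC hT hj x hx.1 hx.2).2
    refine nextP_eq_of_bot _ hgen ?_ ?_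
    · intro k hk
      exact not_lt.2 (hbound k hk).2
    · intro k hk
      exact (hbound k hk).1

lemma prevP_backSetoid (hNC : IsNC T) (hT : IsPairing T) (j : Fin n) :
    prevP (backSetoid T) j = backQinv T j := by
  have h := prevP_nextP (backSetoid T) (backQinv T j)
  rwa [nextP_backSetoid hNC hT, backQ_backQinv hNC hT] at h

lemma isNC_back (hNC : IsNC T) (hT : IsPairing T) : IsNC (backSetoid T) := by
  intro a b c d hab hbc hcd hac hbd
  by_contra hnab
  set S' := backSetoid T with hS'
  have hne1 : ((blockOf S' a).filter (· < b)).Nonempty :=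
    ⟨a, by rw [Finset.mem_filter, mem_blockOf]; exact ⟨S'.iseqv.refl a, hab⟩⟩
  have hne2 : ((blockOf S' a).filter (b < ·)).Nonempty :=
    ⟨c, by rw [Finset.mem_filter, mem_blockOf]; exact ⟨hac, hbc⟩⟩
  set u := ((blockOf S' a).filter (· < b)).max' hne1 with hudef
  set v := ((blockOf S' a).filter (b < ·)).min' hne2 with hvdef
  have hu : S'.r a u ∧ u < b := by
    have := Finset.max'_mem _ hne1
    rwa [Finset.mem_filter, mem_blockOf] at this
  have hv : S'.r a v ∧ b < v := by
    have := Finset.min'_mem _ hne2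
    rwa [Finset.mem_filter, mem_blockOf] at this
  have huv : S'.r u v := S'.iseqv.trans (S'.iseqv.symm hu.1) hv.1
  have hulv : u < v := hu.2.trans hv.2
  have hw := nextP_le S' huv hulv
  have hwblock : S'.r a (nextP S' u) := S'.iseqv.trans hu.1 (rel_nextP S' u)
  have hwb : b < nextP S' u := by
    rcases lt_trichotomy (nextP S' u) b with h | h | h
    · have hmem : nextP S' u ∈ (blockOf S' a).filter (· < b) := by
        rw [Finset.mem_filter, mem_blockOf]; exact ⟨hwblock, h⟩
      exact absurd (Finset.le_max' _ _ hmem) (not_le.2 hw.1)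
    · exact absurd (h ▸ hwblock) hnab
    · exact h
  have hwv : nextP S' u = v := by
    refine le_antisymm hw.2 (Finset.min'_le _ _ ?_)
    rw [Finset.mem_filter, mem_blockOf]
    exact ⟨hwblock, hwb⟩
  have hQu : backQ T u = v := by rw [← nextP_backSetoid hNC hT]; exact hwv
  have huQ : u < backQ T u := by rw [hQu]; exact hulv
  have hbs : b ∈ {x : Fin n | u < x ∧ x < backQ T u} := by
    rw [Set.mem_setOf_eq, hQu]
    exact ⟨hu.2, hwb.trans_le (le_of_eq hwv)⟩
  have hds : d ∈ {x : Fin n | u < x ∧ x < backQ T u} := by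
    refine backSetoid_rel_invariant hNC hT _ ?_ ?_ hbs hbd
    · exact fun x hx => (backQ_open_inv hNC hT huQ hx.1 hx.2).1
    · exact fun x hx => (backQ_open_inv hNC hT huQ hx.1 hx.2).2
  have hvc : v ≤ c := by
    refine Finset.min'_le _ _ ?_
    rw [Finset.mem_filter, mem_blockOf]
    exact ⟨hac, hbc⟩
  have : d < v := by
    have := hds.2
    rwa [hQu] at this
  exact absurd this (not_lt.2 (hvc.trans (le_of_lt hcd)))

lemma archM_backSetoid (hNC : IsNC T) (hT : IsPairing T) (x : Fin (2*n)) :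
    archM (backSetoid T) x = partnerOf T x := by
  rcases parity_cases x with ⟨j, rfl⟩ | ⟨j, rfl⟩
  · rw [archM_dEven, prevP_backSetoid hNC hT, partnerOf_dEven hNC hT]
  · rw [archM_dOdd, nextP_backSetoid hNC hT, partnerOf_dOdd hNC hT]

lemma arch_back (hNC : IsNC T) (hT : IsPairing T) : archSetoid (backSetoid T) = T := by
  apply Setoid.ext
  intro x y
  rw [show (archSetoid (backSetoid T)) x y ↔ (archSetoid (backSetoid T)).r x y from Iff.rfl]
  rw [archSetoid_rel, archM_backSetoid hNC hT, ← rel_iff_partnerOf hT]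

lemma back_arch {S : Setoid (Fin n)} (hS : IsNC S) : backSetoid (archSetoid S) = S := by
  apply arch_injective
  exact arch_back (isNC_arch hS) (isPairing_arch S)

end Back2

section Counting

instance setoid_finite {α : Type*} [Finite α] : Finite (Setoid α) := by
  have hinj : Function.Injective (fun S : Setoid α => (S.r : α → α → Prop)) := by
    intro S T h
    apply Setoid.ext
    intro a b
    rw [show S.r = T.r from h]
  exact Finite.of_injective _ hinj

noncomputable instance setoidFintype {α : Type*} [Finite α] : Fintype (Setoid α) :=
  Fintype.ofFinite _

lemma isPairing_even {m : ℕ} (T : Setoid (Fin m)) (hT : IsPairing T) : m % 2 = 0 := by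
  have h := even_card_of_invol (Finset.univ : Finset (Fin m)).card Finset.univ rfl
    (partnerOf T) (fun x _ => Finset.mem_univ _)
    (fun x _ => partnerOf_invol hT x) (fun x _ => partnerOf_ne hT x)
  rw [Finset.card_univ, Fintype.card_fin] at h
  obtain ⟨c, hc⟩ := h
  omega

lemma no_pairing_odd {m : ℕ} (hm : m % 2 = 1) {d : ℕ} (i : Fin m → Fin d) :
    Nat.card {σ : Setoid (Fin m) // IsNC σ ∧ IsPairing σ ∧ σ ≤ Setoid.ker i} = 0 := by
  have : IsEmpty {σ : Setoid (Fin m) // IsNC σ ∧ IsPairing σ ∧ σ ≤ Setoid.ker i} := by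
    refine ⟨fun ⟨σ, hσ⟩ => ?_⟩
    have := isPairing_even σ hσ.2.1
    omega
  exact Nat.card_of_isEmpty

/-- Functions constant on the blocks of `υ` correspond to functions on the quotient. -/
noncomputable def kerEquiv {α β : Type*} (υ : Setoid α) :
    {i : α → β // υ ≤ Setoid.ker i} ≃ (Quotient υ → β) where
  toFun p := Quotient.lift p.1 (fun a b h => Setoid.le_def.mp p.2 h)
  invFun g := ⟨fun a => g (Quotient.mk υ a), by
    intro a b h
    show g (Quotient.mk υ a) = g (Quotient.mk υ b)
    exact congrArg g (Quotient.sound h)⟩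
  left_inv p := Subtype.ext rfl
  right_inv g := by
    funext q
    induction q using Quotient.ind with
    | _ a => rfl

lemma card_ker {M d : ℕ} (υ : Setoid (Fin M)) :
    (Finset.univ.filter fun i : Fin M → Fin d => υ ≤ Setoid.ker i).card =
      d ^ Nat.card (Quotient υ) := by
  rw [← Fintype.card_subtype, ← Nat.card_eq_fintype_card, Nat.card_congr (kerEquiv υ),
    Nat.card_fun, Nat.card_eq_fintype_card (α := Fin d), Fintype.card_fin]

lemma numOrbits_meander_pos {n : ℕ} (hn : 0 < n) (π ρ : Setoid (Fin n)) :
    0 < numOrbits (meanderMap π ρ) := by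
  have h0 : Nonempty (Fin (2*n)) := ⟨⟨0, by omega⟩⟩
  have : Nonempty (Quotient (orbitSetoid (meanderMap π ρ))) :=
    Nonempty.map (Quotient.mk _) h0
  rw [numOrbits]
  exact Nat.card_pos

lemma numOrbits_meander_le {n : ℕ} (π ρ : Setoid (Fin n)) :
    numOrbits (meanderMap π ρ) ≤ n := by
  have hsurj : Function.Surjective
      (fun k : Fin n => Quotient.mk (orbitSetoid (meanderMap π ρ)) (dEven k)) := by
    intro q
    induction q using Quotient.ind with
    | _ x =>
      rcases parity_cases x with ⟨k, rfl⟩ | ⟨k, rfl⟩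
      · exact ⟨k, rfl⟩
      · refine ⟨nextP ρ k, ?_⟩
        refine Quotient.sound ?_
        exact Relation.EqvGen.symm _ _
          (Relation.EqvGen.rel _ _ (meanderMap_dOdd π ρ k))
  calc numOrbits (meanderMap π ρ) ≤ Nat.card (Fin n) :=
        Nat.card_le_card_of_surjective _ hsurj
    _ = n := by rw [Nat.card_eq_fintype_card, Fintype.card_fin]

/-- The central counting identity. -/
lemma count_main (n d : ℕ) :
    ∑ i : Fin (2*n) → Fin d,
      (Nat.card {σ : Setoid (Fin (2*n)) // IsNC σ ∧ IsPairing σ ∧ σ ≤ Setoid.ker i}) ^ 2 =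
    ∑ pr ∈ Finset.univ.filter
        (fun pr : Setoid (Fin n) × Setoid (Fin n) => IsNC pr.1 ∧ IsNC pr.2),
      d ^ numOrbits (meanderMap pr.1 pr.2) := by
  set F : Finset (Setoid (Fin (2*n))) :=
    Finset.univ.filter (fun σ => IsNC σ ∧ IsPairing σ) with hF
  have step1 : ∀ i : Fin (2*n) → Fin d,
      Nat.card {σ : Setoid (Fin (2*n)) // IsNC σ ∧ IsPairing σ ∧ σ ≤ Setoid.ker i}
        = (F.filter (fun σ => σ ≤ Setoid.ker i)).card := by
    intro i
    rw [Nat.card_eq_fintype_card, Fintype.card_subtype, hF, Finset.filter_filter]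
    congr 1
    apply Finset.filter_congr
    intro σ _
    simp [and_assoc]
  calc ∑ i : Fin (2*n) → Fin d,
      (Nat.card {σ : Setoid (Fin (2*n)) // IsNC σ ∧ IsPairing σ ∧ σ ≤ Setoid.ker i}) ^ 2
      = ∑ i : Fin (2*n) → Fin d, ∑ σ ∈ F, ∑ τ ∈ F,
          (if σ ≤ Setoid.ker i then 1 else 0) * (if τ ≤ Setoid.ker i then 1 else 0) := by
        refine Finset.sum_congr rfl fun i _ => ?_
        rw [step1 i, sq, Finset.card_filter, ← Finset.sum_mul_sum]
    _ = ∑ σ ∈ F, ∑ τ ∈ F, ∑ i : Fin (2*n) → Fin d,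
          (if σ ⊔ τ ≤ Setoid.ker i then 1 else 0) := by
        rw [Finset.sum_comm]
        refine Finset.sum_congr rfl fun σ _ => ?_
        rw [Finset.sum_comm]
        refine Finset.sum_congr rfl fun τ _ => ?_
        refine Finset.sum_congr rfl fun i _ => ?_
        rw [ite_zero_mul_ite_zero, mul_one]
        exact if_congr sup_le_iff.symm rfl rfl
    _ = ∑ σ ∈ F, ∑ τ ∈ F, d ^ Nat.card (Quotient (σ ⊔ τ)) := by
        refine Finset.sum_congr rfl fun σ _ => Finset.sum_congr rfl fun τ _ => ?_
        rw [← Finset.card_filter, card_ker]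
    _ = ∑ st ∈ F ×ˢ F, d ^ Nat.card (Quotient (st.1 ⊔ st.2)) := by
        rw [Finset.sum_product]
    _ = ∑ pr ∈ Finset.univ.filter
          (fun pr : Setoid (Fin n) × Setoid (Fin n) => IsNC pr.1 ∧ IsNC pr.2),
        d ^ numOrbits (meanderMap pr.1 pr.2) := by
        refine Finset.sum_nbij'
          (fun st => (backSetoid st.1, backSetoid st.2))
          (fun pr => (archSetoid pr.1, archSetoid pr.2)) ?_ ?_ ?_ ?_ ?_
        · intro st hst
          rw [Finset.mem_product, hF, Finset.mem_filter, Finset.mem_filter] at hst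
          rw [Finset.mem_filter]
          exact ⟨Finset.mem_univ _, isNC_back hst.1.2.1 hst.1.2.2,
            isNC_back hst.2.2.1 hst.2.2.2⟩
        · intro pr hpr
          rw [Finset.mem_filter] at hpr
          rw [Finset.mem_product, hF, Finset.mem_filter, Finset.mem_filter]
          exact ⟨⟨Finset.mem_univ _, isNC_arch hpr.2.1, isPairing_arch _⟩,
            ⟨Finset.mem_univ _, isNC_arch hpr.2.2, isPairing_arch _⟩⟩
        · intro st hst
          rw [Finset.mem_product, hF, Finset.mem_filter, Finset.mem_filter] at hst
          exact Prod.ext (arch_back hst.1.2.1 hst.1.2.2) (arch_back hst.2.2.1 hst.2.2.2)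
        · intro pr hpr
          rw [Finset.mem_filter] at hpr
          exact Prod.ext (back_arch hpr.2.1) (back_arch hpr.2.2)
        · intro st hst
          rw [Finset.mem_product, hF, Finset.mem_filter, Finset.mem_filter] at hst
          have h1 : archSetoid (backSetoid st.1) = st.1 := arch_back hst.1.2.1 hst.1.2.2
          have h2 : archSetoid (backSetoid st.2) = st.2 := arch_back hst.2.2.1 hst.2.2.2
          rw [numOrbits, orbit_meander, h1, h2]

end Counting

section Tensor

open TensorProduct

lemma expand_pow {A : Type*} [Ring A] [Algebra ℂ A] {d : ℕ} (a : Fin d → A) (m : ℕ) :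
    (∑ i, a i ⊗ₜ[ℂ] a i) ^ m =
      ∑ i : Fin m → Fin d,
        ((List.ofFn fun k => a (i k)).prod ⊗ₜ[ℂ] (List.ofFn fun k => a (i k)).prod) := by
  induction m with
  | zero =>
    rw [pow_zero, Fintype.sum_unique]
    simp [List.ofFn_zero, Algebra.TensorProduct.one_def]
  | succ m ih =>
    rw [pow_succ', ih, Finset.sum_mul_sum]
    symm
    refine (Fintype.sum_equiv (Fin.consEquiv (fun _ : Fin (m+1) => Fin d)).symm _
      (fun p => ((a p.1 * (List.ofFn fun k => a (p.2 k)).prod) ⊗ₜ[ℂ]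
                 (a p.1 * (List.ofFn fun k => a (p.2 k)).prod))) ?_).trans ?_
    · intro g
      rw [List.ofFn_succ, List.prod_cons]
      rfl
    · rw [Fintype.sum_prod_type]
      refine Finset.sum_congr rfl fun i _ => Finset.sum_congr rfl fun f _ => ?_
      rw [Algebra.TensorProduct.tmul_mul_tmul]

lemma moment_formula {A : Type*} [Ring A] [Algebra ℂ A] (φ : A →ₗ[ℂ] ℂ)
    {d : ℕ} (a : Fin d → A) (m : ℕ) :
    (TensorProduct.lid ℂ ℂ) ((TensorProduct.map φ φ) ((∑ i, a i ⊗ₜ[ℂ] a i) ^ m)) =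
      ∑ i : Fin m → Fin d,
        φ ((List.ofFn fun k => a (i k)).prod) * φ ((List.ofFn fun k => a (i k)).prod) := by
  rw [expand_pow, map_sum, map_sum]
  refine Finset.sum_congr rfl fun i _ => ?_
  rw [TensorProduct.map_tmul, TensorProduct.lid_tmul, smul_eq_mul]

end Tensor

section Regroup

lemma regroup (n d : ℕ) (hn : 0 < n) :
    ∑ pr ∈ Finset.univ.filter
        (fun pr : Setoid (Fin n) × Setoid (Fin n) => IsNC pr.1 ∧ IsNC pr.2),
      (d : ℂ) ^ numOrbits (meanderMap pr.1 pr.2) =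
    ∑ k ∈ Finset.Icc 1 n, (mcount n k : ℂ) * (d : ℂ) ^ k := by
  have hmaps : ∀ pr ∈ Finset.univ.filter
      (fun pr : Setoid (Fin n) × Setoid (Fin n) => IsNC pr.1 ∧ IsNC pr.2),
      numOrbits (meanderMap pr.1 pr.2) ∈ Finset.Icc 1 n :=
    fun pr _ => Finset.mem_Icc.mpr ⟨numOrbits_meander_pos hn _ _, numOrbits_meander_le _ _⟩
  rw [← Finset.sum_fiberwise_of_maps_to hmaps]
  refine Finset.sum_congr rfl fun k hk => ?_
  have hfilter : (Finset.univ.filter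
        (fun pr : Setoid (Fin n) × Setoid (Fin n) => IsNC pr.1 ∧ IsNC pr.2)).filter
        (fun pr => numOrbits (meanderMap pr.1 pr.2) = k)
      = Finset.univ.filter
        (fun pr : Setoid (Fin n) × Setoid (Fin n) =>
          IsNC pr.1 ∧ IsNC pr.2 ∧ numOrbits (meanderMap pr.1 pr.2) = k) := by
    rw [Finset.filter_filter]
    apply Finset.filter_congr
    intro pr _
    simp [and_assoc]
  calc ∑ pr ∈ (Finset.univ.filter
        (fun pr : Setoid (Fin n) × Setoid (Fin n) => IsNC pr.1 ∧ IsNC pr.2)).filter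
        (fun pr => numOrbits (meanderMap pr.1 pr.2) = k),
          (d : ℂ) ^ numOrbits (meanderMap pr.1 pr.2)
      = ∑ pr ∈ (Finset.univ.filter
        (fun pr : Setoid (Fin n) × Setoid (Fin n) => IsNC pr.1 ∧ IsNC pr.2)).filter
        (fun pr => numOrbits (meanderMap pr.1 pr.2) = k), (d : ℂ) ^ k :=
        Finset.sum_congr rfl fun pr hpr => by
          rw [(Finset.mem_filter.mp hpr).2]
    _ = ((Finset.univ.filter
        (fun pr : Setoid (Fin n) × Setoid (Fin n) => IsNC pr.1 ∧ IsNC pr.2)).filter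
        (fun pr => numOrbits (meanderMap pr.1 pr.2) = k)).card • (d : ℂ) ^ k :=
        Finset.sum_const _
    _ = (mcount n k : ℂ) * (d : ℂ) ^ k := by
        rw [nsmul_eq_mul, hfilter]
        congr 2
        rw [mcount, Nat.card_eq_fintype_card, Fintype.card_subtype]

end Regroup


open TensorProduct in
/-- Let `a_1,…,a_d` be a free family of self-adjoint standard semicircular
elements of a `*`-probability space `(𝒜,φ)` (so that mixed moments
`φ(a_{i(1)}⋯a_{i(m)})` count the non-crossing pairings `σ` of `{1,…,m}` with
`σ ≤ ker i`), and let `x = Σ_i a_i ⊗ a_i ∈ (𝒜 ⊗ 𝒜, φ ⊗ φ)`.  Then the odd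
moments of `x` vanish and
`(φ⊗φ)(x^{2n}) = Σ_{π,ρ ∈ NC(n)} d^{#Orb(M_{π,ρ})} = Σ_{k=1}^n m^{(k)}_n d^k`. -/
theorem tensor_semicircular_moments_meandric
    (A : Type*) [Ring A] [Algebra ℂ A] [StarRing A]
    (φ : A →ₗ[ℂ] ℂ) (hφ1 : φ 1 = 1)
    (hpos : ∀ z : A, ∃ r : ℝ, 0 ≤ r ∧ φ (star z * z) = (r : ℂ))
    (d : ℕ) (a : Fin d → A) (hsa : ∀ i, star (a i) = a i)
    (hfree : ∀ (m : ℕ) (i : Fin m → Fin d),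
      φ ((List.ofFn fun k => a (i k)).prod) =
        (Nat.card {σ : Setoid (Fin m) //
          IsNC σ ∧ IsPairing σ ∧ σ ≤ Setoid.ker i} : ℂ)) :
    ∀ n : ℕ, 0 < n →
      ((TensorProduct.lid ℂ ℂ) ((TensorProduct.map φ φ)
          ((∑ i, a i ⊗ₜ[ℂ] a i) ^ (2*n - 1))) = 0) ∧
      ((TensorProduct.lid ℂ ℂ) ((TensorProduct.map φ φ)
          ((∑ i, a i ⊗ₜ[ℂ] a i) ^ (2*n))) =
        ∑ᶠ pr ∈ {pr : Setoid (Fin n) × Setoid (Fin n) | IsNC pr.1 ∧ IsNC pr.2},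
          (d : ℂ) ^ numOrbits (meanderMap pr.1 pr.2)) ∧
      ((TensorProduct.lid ℂ ℂ) ((TensorProduct.map φ φ)
          ((∑ i, a i ⊗ₜ[ℂ] a i) ^ (2*n))) =
        ∑ k ∈ Finset.Icc 1 n, (mcount n k : ℂ) * (d : ℂ) ^ k) := by
  intro n hn
  have key : (TensorProduct.lid ℂ ℂ) ((TensorProduct.map φ φ)
      ((∑ i, a i ⊗ₜ[ℂ] a i) ^ (2*n))) =
      ∑ pr ∈ Finset.univ.filter
        (fun pr : Setoid (Fin n) × Setoid (Fin n) => IsNC pr.1 ∧ IsNC pr.2),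
      (d : ℂ) ^ numOrbits (meanderMap pr.1 pr.2) := by
    rw [moment_formula φ a (2*n)]
    calc ∑ i : Fin (2*n) → Fin d,
        φ ((List.ofFn fun k => a (i k)).prod) * φ ((List.ofFn fun k => a (i k)).prod)
        = ∑ i : Fin (2*n) → Fin d,
            ((Nat.card {σ : Setoid (Fin (2*n)) //
              IsNC σ ∧ IsPairing σ ∧ σ ≤ Setoid.ker i} : ℕ) : ℂ) ^ 2 := by
          refine Finset.sum_congr rfl fun i _ => ?_
          rw [hfree (2*n) i]
          ring
      _ = ((∑ i : Fin (2*n) → Fin d,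
            (Nat.card {σ : Setoid (Fin (2*n)) //
              IsNC σ ∧ IsPairing σ ∧ σ ≤ Setoid.ker i}) ^ 2 : ℕ) : ℂ) := by
          push_cast
          rfl
      _ = ((∑ pr ∈ Finset.univ.filter
            (fun pr : Setoid (Fin n) × Setoid (Fin n) => IsNC pr.1 ∧ IsNC pr.2),
            d ^ numOrbits (meanderMap pr.1 pr.2) : ℕ) : ℂ) := by
          rw [count_main n d]
      _ = ∑ pr ∈ Finset.univ.filter
            (fun pr : Setoid (Fin n) × Setoid (Fin n) => IsNC pr.1 ∧ IsNC pr.2),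
          (d : ℂ) ^ numOrbits (meanderMap pr.1 pr.2) := by
          push_cast
          rfl
  refine ⟨?_, ?_, ?_⟩
  · rw [moment_formula φ a (2*n - 1)]
    refine Finset.sum_eq_zero fun i _ => ?_
    rw [hfree (2*n - 1) i, no_pairing_odd (by omega) i]
    norm_num
  · rw [key]
    have hset : {pr : Setoid (Fin n) × Setoid (Fin n) | IsNC pr.1 ∧ IsNC pr.2} =
        ↑(Finset.univ.filter
          (fun pr : Setoid (Fin n) × Setoid (Fin n) => IsNC pr.1 ∧ IsNC pr.2)) := by
      ext pr
      simp
    rw [hset, finsum_mem_coe_finset]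
  · rw [key, regroup n d hn]
end

section
/- Let a_1,...,a_d be a free family of standard semicircular elements in a *-probability space (𝒜, φ), and let y = Σ_{i=1}^d a_i² ⊗ a_i² in (𝒜 ⊗ 𝒜, φ ⊗ φ). Then for every n ∈ ℕ, (φ⊗φ)(y^n) = Σ_{π,ρ ∈ NC(n)} d^{|π ∨̃ ρ|}, where ∨̃ is the join in the lattice of all partitions of {1,...,n} and |·| denotes the number of blocks. -/
open scoped Classical

namespace MD

/-- snoc form of ofFn over ℕ-valued functions. -/
lemma ofFnVal_succ {A : Type*} (g : ℕ → A) (m : ℕ) :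
    (List.ofFn fun k : Fin (m+1) => g k.val) =
      (List.ofFn fun k : Fin m => g k.val) ++ [g m] := by
  rw [List.ofFn_succ', List.concat_eq_append]
  rfl

lemma ofFnVal_congr {A : Type*} (g : ℕ → A) {m m' : ℕ} (h : m = m') :
    (List.ofFn fun k : Fin m => g k.val) = (List.ofFn fun k : Fin m' => g k.val) := by
  subst h; rfl

lemma prod_sq_eq_double {A : Type*} [Monoid A] (c : ℕ → A) :
    ∀ n : ℕ, (List.ofFn fun k : Fin n => c k.val * c k.val).prod =
      (List.ofFn fun k : Fin (2*n) => c (k.val / 2)).prod := by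
  intro n
  induction n with
  | zero => simp
  | succ n ih =>
    rw [ofFnVal_succ (fun t => c t * c t) n,
      ofFnVal_congr (fun t => c (t/2)) (show 2*(n+1) = (2*n+1)+1 by ring),
      ofFnVal_succ (fun t => c (t/2)) (2*n+1),
      ofFnVal_succ (fun t => c (t/2)) (2*n)]
    simp only [List.prod_append, ih, List.prod_cons, List.prod_nil]
    have h1 : (2*n)/2 = n := by omega
    have h2 : (2*n+1)/2 = n := by omega
    rw [h1, h2, mul_one, mul_one, mul_assoc]

/-- Noncommutative expansion of a power of a finite sum. -/
lemma sum_pow_expand {A : Type*} [Semiring A] {ι : Type*} [Fintype ι] (f : ι → A) :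
    ∀ n : ℕ, (∑ i, f i) ^ n = ∑ g : Fin n → ι, (List.ofFn fun k => f (g k)).prod := by
  intro n
  induction n with
  | zero => simp
  | succ n ih =>
    rw [pow_succ', ih, Finset.sum_mul_sum,
      ← ((Fin.consEquiv fun _ : Fin (n+1) => ι).sum_comp
        (fun h => (List.ofFn fun k => f (h k)).prod) :)]
    rw [Fintype.sum_prod_type]
    simp only [Fin.consEquiv_apply, List.ofFn_succ, Fin.cons_zero, Fin.cons_succ,
      List.prod_cons]

/-- Product of a list of pure tensors. -/
lemma prod_tmul {R : Type*} [CommSemiring R] {A B : Type*} [Semiring A] [Semiring B]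
    [Algebra R A] [Algebra R B] (n : ℕ) (x : Fin n → A) (y : Fin n → B) :
    (List.ofFn fun k => (x k) ⊗ₜ[R] (y k)).prod =
      ((List.ofFn x).prod) ⊗ₜ[R] ((List.ofFn y).prod) := by
  induction n with
  | zero => simp [Algebra.TensorProduct.one_def]
  | succ n ih =>
    rw [List.ofFn_succ, List.ofFn_succ, List.ofFn_succ, List.prod_cons, List.prod_cons,
      List.prod_cons, ih, Algebra.TensorProduct.tmul_mul_tmul]

variable {n : ℕ}

lemma mem_blockOf {S : Setoid (Fin n)} {i j : Fin n} :
    j ∈ blockOf S i ↔ S.r i j := by simp [blockOf]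

lemma blockOf_eq {S : Setoid (Fin n)} {i j : Fin n} (h : S.r i j) :
    blockOf S i = blockOf S j := by
  ext m
  simp only [mem_blockOf]
  exact ⟨fun h2 => S.iseqv.trans (S.iseqv.symm h) h2, fun h2 => S.iseqv.trans h h2⟩

lemma rel_nextP (S : Setoid (Fin n)) (i : Fin n) : S.r i (nextP S i) := by
  unfold nextP
  split
  · next h =>
    have := Finset.min'_mem _ h
    simp only [Finset.mem_filter, mem_blockOf] at this
    exact this.1
  · exact mem_blockOf.mp (Finset.min'_mem _ (blockOf_nonempty S i))

lemma rel_prevP (S : Setoid (Fin n)) (i : Fin n) : S.r i (prevP S i) := by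
  unfold prevP
  split
  · next h =>
    have := Finset.max'_mem _ h
    simp only [Finset.mem_filter, mem_blockOf] at this
    exact this.1
  · exact mem_blockOf.mp (Finset.max'_mem _ (blockOf_nonempty S i))

/-- Dichotomy for `nextP`. -/
lemma nextP_spec (S : Setoid (Fin n)) (i : Fin n) :
    (i < nextP S i ∧ ∀ m, S.r i m → i < m → nextP S i ≤ m)
    ∨ ((∀ m, S.r i m → m ≤ i) ∧ ∀ m, S.r i m → nextP S i ≤ m) := by
  unfold nextP
  split
  · next h =>
    left
    have hmem := Finset.min'_mem _ h
    simp only [Finset.mem_filter, mem_blockOf] at hmem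
    refine ⟨hmem.2, fun m hm him => ?_⟩
    exact Finset.min'_le _ m (by simp [Finset.mem_filter, mem_blockOf, hm, him])
  · next h =>
    right
    constructor
    · intro m hm
      by_contra hle
      exact h ⟨m, by simp [Finset.mem_filter, mem_blockOf, hm]; omega⟩
    · intro m hm
      exact Finset.min'_le _ m (mem_blockOf.mpr hm)

lemma prevP_spec (S : Setoid (Fin n)) (i : Fin n) :
    (prevP S i < i ∧ ∀ m, S.r i m → m < i → m ≤ prevP S i)
    ∨ ((∀ m, S.r i m → i ≤ m) ∧ ∀ m, S.r i m → m ≤ prevP S i) := by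
  unfold prevP
  split
  · next h =>
    left
    have hmem := Finset.max'_mem _ h
    simp only [Finset.mem_filter, mem_blockOf] at hmem
    refine ⟨hmem.2, fun m hm him => ?_⟩
    exact Finset.le_max' _ m (by simp [Finset.mem_filter, mem_blockOf, hm, him])
  · next h =>
    right
    constructor
    · intro m hm
      by_contra hle
      exact h ⟨m, by simp [Finset.mem_filter, mem_blockOf, hm]; omega⟩
    · intro m hm
      exact Finset.le_max' _ m (mem_blockOf.mpr hm)

lemma prevP_nextP (S : Setoid (Fin n)) (i : Fin n) : prevP S (nextP S i) = i := by
  set k := nextP S i with hk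
  have hrel : S.r i k := rel_nextP S i
  have hrelk : S.r k i := S.iseqv.symm hrel
  rcases nextP_spec S i with ⟨hlt, hmin⟩ | ⟨hmax, hmin⟩
  · rcases prevP_spec S k with ⟨hlt', hmax'⟩ | ⟨hge', _⟩
    · -- prevP k is max of elements of block below k; show it is i
      refine le_antisymm ?_ (hmax' i hrelk hlt)
      by_contra hgt
      push_neg at hgt
      have h1 : S.r i (prevP S k) := S.iseqv.trans hrel (rel_prevP S k)
      have := hmin _ h1 hgt
      exact absurd hlt' (not_lt.mpr this)
    · exact absurd (hge' i hrelk) (not_le.mpr hlt)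
  · -- i is the max of its block, k is the min
    rcases prevP_spec S k with ⟨hlt', hmax'⟩ | ⟨_, hmax'⟩
    · -- contradiction: everything in block is ≥ k
      exfalso
      have h1 : S.r i (prevP S k) := S.iseqv.trans hrel (rel_prevP S k)
      have h2 := hmin _ h1
      exact absurd hlt' (not_lt.mpr h2)
    · -- prevP k = max of block = i
      refine le_antisymm ?_ (hmax' i hrelk)
      have h1 : S.r i (prevP S k) := S.iseqv.trans hrel (rel_prevP S k)
      exact hmax _ h1

lemma nextP_prevP (S : Setoid (Fin n)) (i : Fin n) : nextP S (prevP S i) = i := by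
  set k := prevP S i with hk
  have hrel : S.r i k := rel_prevP S i
  have hrelk : S.r k i := S.iseqv.symm hrel
  rcases prevP_spec S i with ⟨hlt, hmax⟩ | ⟨hmin, hmax⟩
  · rcases nextP_spec S k with ⟨hlt', hmin'⟩ | ⟨hle', _⟩
    · refine le_antisymm (hmin' i hrelk hlt) ?_
      by_contra hgt
      push_neg at hgt
      have h1 : S.r i (nextP S k) := S.iseqv.trans hrel (rel_nextP S k)
      have := hmax _ h1 hgt
      exact absurd hlt' (not_lt.mpr this)
    · exact absurd (hle' i hrelk) (not_le.mpr hlt)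
  · rcases nextP_spec S k with ⟨hlt', hmin'⟩ | ⟨_, hmin'⟩
    · exfalso
      have h1 : S.r i (nextP S k) := S.iseqv.trans hrel (rel_nextP S k)
      exact absurd hlt' (not_lt.mpr (hmax _ h1))
    · refine le_antisymm (hmin' i hrelk) ?_
      exact hmin _ (S.iseqv.trans hrel (rel_nextP S k))

lemma nextP_inj (S : Setoid (Fin n)) : Function.Injective (nextP S) :=
  Function.LeftInverse.injective (g := prevP S) (prevP_nextP S)

variable {n : ℕ}

def halfF (x : Fin (2*n)) : Fin n := ⟨x.val / 2, by have := x.isLt; omega⟩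

@[simp] lemma dEven_val (j : Fin n) : (dEven j).val = 2 * j.val := rfl
@[simp] lemma dOdd_val (j : Fin n) : (dOdd j).val = 2 * j.val + 1 := rfl
@[simp] lemma halfF_val (x : Fin (2*n)) : (halfF x).val = x.val / 2 := rfl

@[simp] lemma halfF_dEven (j : Fin n) : halfF (dEven j) = j := by
  apply Fin.ext; simp <;> omega

@[simp] lemma halfF_dOdd (j : Fin n) : halfF (dOdd j) = j := by
  apply Fin.ext; simp <;> omega

lemma dEven_inj : Function.Injective (dEven (n := n)) := by
  intro a b h
  apply Fin.ext
  have := congrArg Fin.val h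
  simp at this; omega

lemma dOdd_inj : Function.Injective (dOdd (n := n)) := by
  intro a b h
  apply Fin.ext
  have := congrArg Fin.val h
  simp at this; omega

lemma eq_dEven_of_even {x : Fin (2*n)} (h : x.val % 2 = 0) : x = dEven (halfF x) := by
  apply Fin.ext; simp <;> omega

lemma eq_dOdd_of_odd {x : Fin (2*n)} (h : x.val % 2 = 1) : x = dOdd (halfF x) := by
  apply Fin.ext; simp <;> omega

/-- The involution whose pairs are `{2j+1, 2·(nextP S j)}`. -/
noncomputable def qP (S : Setoid (Fin n)) (x : Fin (2*n)) : Fin (2*n) :=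
  if x.val % 2 = 0 then dOdd (prevP S (halfF x)) else dEven (nextP S (halfF x))

lemma qP_dEven (S : Setoid (Fin n)) (j : Fin n) :
    qP S (dEven j) = dOdd (prevP S j) := by
  unfold qP
  rw [if_pos (by simp <;> omega), halfF_dEven]

lemma qP_dOdd (S : Setoid (Fin n)) (j : Fin n) :
    qP S (dOdd j) = dEven (nextP S j) := by
  unfold qP
  rw [if_neg (by simp <;> omega), halfF_dOdd]

lemma qP_invol (S : Setoid (Fin n)) (x : Fin (2*n)) : qP S (qP S x) = x := by
  rcases Nat.even_or_odd x.val with h | h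
  · rw [Nat.even_iff] at h
    rw [eq_dEven_of_even h, qP_dEven, qP_dOdd, nextP_prevP]
  · rw [Nat.odd_iff] at h
    rw [eq_dOdd_of_odd h, qP_dOdd, qP_dEven, prevP_nextP]

lemma qP_ne (S : Setoid (Fin n)) (x : Fin (2*n)) : qP S x ≠ x := by
  intro h
  have := congrArg Fin.val h
  unfold qP at this
  split at this <;> simp_all <;> omega

/-- The pairing relation associated to an involution. -/
def pairRel {m : ℕ} (f : Fin m → Fin m) (x y : Fin m) : Prop := x = y ∨ f x = y

lemma pairRel_equivalence {m : ℕ} (f : Fin m → Fin m) (hf : ∀ x, f (f x) = x) :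
    Equivalence (pairRel f) := by
  constructor
  · intro x; exact Or.inl rfl
  · rintro x y (rfl | rfl)
    · exact Or.inl rfl
    · exact Or.inr (hf x)
  · rintro x y z (rfl | rfl) (rfl | rfl)
    · exact Or.inl rfl
    · exact Or.inr rfl
    · exact Or.inr rfl
    · exact Or.inl (hf x).symm

/-- The "fattening" of a partition of `Fin n`: the pairing of `Fin (2n)`
pairing `2j+1` with `2 nextP j`. -/
noncomputable def fatten (S : Setoid (Fin n)) : Setoid (Fin (2*n)) :=
  ⟨pairRel (qP S), pairRel_equivalence (qP S) (qP_invol S)⟩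

lemma fatten_r (S : Setoid (Fin n)) (x y : Fin (2*n)) :
    (fatten S).r x y ↔ x = y ∨ qP S x = y := Iff.rfl

lemma fatten_pairing (S : Setoid (Fin n)) : IsPairing (fatten S) := by
  intro x
  refine ⟨qP S x, qP_ne S x, Or.inr rfl, fun z hz => ?_⟩
  rcases hz with rfl | rfl
  · exact Or.inl rfl
  · exact Or.inr rfl

variable {n : ℕ}

set_option maxHeartbeats 1000000 in
lemma fatten_nc {S : Setoid (Fin n)} (hS : IsNC S) : IsNC (fatten S) := by
  intro a b c d hab hbc hcd hac hbd
  exfalso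
  rcases hac with rfl | hac
  · exact lt_irrefl a (lt_trans hab hbc)
  rcases hbd with rfl | hbd
  · exact lt_irrefl b (lt_trans hbc hcd)
  have keyA : ∃ j k : Fin n, nextP S j = k ∧
      ((a = dOdd j ∧ c = dEven k ∧ j.val < k.val) ∨
       (a = dEven k ∧ c = dOdd j ∧ k.val ≤ j.val)) := by
    rcases Nat.even_or_odd a.val with h | h
    · rw [Nat.even_iff] at h
      have ha := eq_dEven_of_even h
      have hc' : c = dOdd (prevP S (halfF a)) := by
        rw [← hac, ha, qP_dEven, halfF_dEven]
      refine ⟨prevP S (halfF a), halfF a, nextP_prevP S _, Or.inr ⟨ha, hc', ?_⟩⟩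
      have hlt : a < c := lt_trans hab hbc
      rw [ha, hc', Fin.lt_def] at hlt
      simp only [dEven_val, dOdd_val, halfF_val] at hlt ⊢
      omega
    · rw [Nat.odd_iff] at h
      have ha := eq_dOdd_of_odd h
      have hc' : c = dEven (nextP S (halfF a)) := by
        rw [← hac, ha, qP_dOdd, halfF_dOdd]
      refine ⟨halfF a, nextP S (halfF a), rfl, Or.inl ⟨ha, hc', ?_⟩⟩
      have hlt : a < c := lt_trans hab hbc
      rw [ha, hc', Fin.lt_def] at hlt
      simp only [dEven_val, dOdd_val, halfF_val] at hlt ⊢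
      omega
  have keyB : ∃ j k : Fin n, nextP S j = k ∧
      ((b = dOdd j ∧ d = dEven k ∧ j.val < k.val) ∨
       (b = dEven k ∧ d = dOdd j ∧ k.val ≤ j.val)) := by
    rcases Nat.even_or_odd b.val with h | h
    · rw [Nat.even_iff] at h
      have hb := eq_dEven_of_even h
      have hd' : d = dOdd (prevP S (halfF b)) := by
        rw [← hbd, hb, qP_dEven, halfF_dEven]
      refine ⟨prevP S (halfF b), halfF b, nextP_prevP S _, Or.inr ⟨hb, hd', ?_⟩⟩
      have hlt : b < d := lt_trans hbc hcd
      rw [hb, hd', Fin.lt_def] at hlt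
      simp only [dEven_val, dOdd_val, halfF_val] at hlt ⊢
      omega
    · rw [Nat.odd_iff] at h
      have hb := eq_dOdd_of_odd h
      have hd' : d = dEven (nextP S (halfF b)) := by
        rw [← hbd, hb, qP_dOdd, halfF_dOdd]
      refine ⟨halfF b, nextP S (halfF b), rfl, Or.inl ⟨hb, hd', ?_⟩⟩
      have hlt : b < d := lt_trans hbc hcd
      rw [hb, hd', Fin.lt_def] at hlt
      simp only [dEven_val, dOdd_val, halfF_val] at hlt ⊢
      omega
  obtain ⟨j, k, hjk, hA⟩ := keyA
  obtain ⟨j', k', hjk', hB⟩ := keyB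
  have hrjk : S.r j k := hjk ▸ rel_nextP S j
  have hrjk' : S.r j' k' := hjk' ▸ rel_nextP S j'
  rcases hA with ⟨ha, hc, hjlt⟩ | ⟨ha, hc, hkle⟩
  · -- A1: a = o j, c = e k, j < k; minimality of k
    have hmin : ∀ m, S.r j m → j < m → k ≤ m := by
      rcases nextP_spec S j with ⟨_, h2⟩ | ⟨h1, _⟩
      · intro m hm hlt; exact hjk ▸ h2 m hm hlt
      · exfalso; have := h1 k hrjk; rw [Fin.le_def] at this; omega
    rcases hB with ⟨hb, hd, hjlt'⟩ | ⟨hb, hd, hkle'⟩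
    · -- A1A1
      subst ha hb hc hd
      rw [Fin.lt_def] at hab hbc hcd
      simp only [dEven_val, dOdd_val] at hab hbc hcd
      have h4 := hS j j' k k' (Fin.lt_def.mpr (by omega)) (Fin.lt_def.mpr (by omega))
        (Fin.lt_def.mpr (by omega)) hrjk hrjk'
      have h5 := hmin j' h4 (Fin.lt_def.mpr (by omega))
      rw [Fin.le_def] at h5; omega
    · -- A1A2
      subst ha hb hc hd
      rw [Fin.lt_def] at hab hbc hcd
      simp only [dEven_val, dOdd_val] at hab hbc hcd
      rcases eq_or_lt_of_le (show (k : ℕ) ≤ (j' : ℕ) by omega) with he | hlt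
      · have hkj' : k = j' := Fin.ext he
        have h4 : S.r j k' := S.iseqv.trans (hkj' ▸ hrjk) hrjk'
        have h5 := hmin k' h4 (Fin.lt_def.mpr (by omega))
        rw [Fin.le_def] at h5; omega
      · have h4 := hS j k' k j' (Fin.lt_def.mpr (by omega)) (Fin.lt_def.mpr (by omega))
          (Fin.lt_def.mpr hlt) hrjk (S.iseqv.symm hrjk')
        have h5 := hmin k' h4 (Fin.lt_def.mpr (by omega))
        rw [Fin.le_def] at h5; omega
  · -- A2: a = e k, c = o j, k ≤ j; j is max of its block
    have hjmax : ∀ m, S.r j m → m ≤ j := by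
      rcases nextP_spec S j with ⟨h1, _⟩ | ⟨h1, _⟩
      · exfalso; rw [hjk, Fin.lt_def] at h1; omega
      · exact h1
    rcases hB with ⟨hb, hd, hjlt'⟩ | ⟨hb, hd, hkle'⟩
    · -- A2A1
      subst ha hb hc hd
      rw [Fin.lt_def] at hab hbc hcd
      simp only [dEven_val, dOdd_val] at hab hbc hcd
      rcases eq_or_lt_of_le (show (k : ℕ) ≤ (j' : ℕ) by omega) with he | hlt
      · have hkj' : k = j' := Fin.ext he
        have h4 : S.r j k' := S.iseqv.trans (hkj' ▸ hrjk) hrjk'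
        have h5 := hjmax k' h4
        rw [Fin.le_def] at h5; omega
      · have h4 := hS k j' j k' (Fin.lt_def.mpr hlt) (Fin.lt_def.mpr (by omega))
          (Fin.lt_def.mpr (by omega)) (S.iseqv.symm hrjk) hrjk'
        have h5 : S.r j j' := S.iseqv.trans hrjk h4
        have h6 : S.r j k' := S.iseqv.trans h5 hrjk'
        have h7 := hjmax k' h6
        rw [Fin.le_def] at h7; omega
    · -- A2A2
      subst ha hb hc hd
      rw [Fin.lt_def] at hab hbc hcd
      simp only [dEven_val, dOdd_val] at hab hbc hcd
      rcases eq_or_lt_of_le (show (k' : ℕ) ≤ (j : ℕ) by omega) with he | hlt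
      · have hk'j : k' = j := Fin.ext he
        have h4 : S.r j j' := S.iseqv.symm (hk'j ▸ hrjk')
        have h5 := hjmax j' h4
        rw [Fin.le_def] at h5; omega
      · have h4 := hS k k' j j' (Fin.lt_def.mpr (by omega)) (Fin.lt_def.mpr hlt)
          (Fin.lt_def.mpr (by omega)) (S.iseqv.symm hrjk) (S.iseqv.symm hrjk')
        have h5 : S.r j k' := S.iseqv.trans hrjk h4
        have h6 : S.r j j' := S.iseqv.trans h5 (S.iseqv.symm hrjk')
        have h7 := hjmax j' h6
        rw [Fin.le_def] at h7; omega

lemma fatten_ker {S : Setoid (Fin n)} {d : ℕ} {i : Fin n → Fin d}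
    (h : S ≤ Setoid.ker i) :
    fatten S ≤ Setoid.ker (fun x : Fin (2*n) => i (halfF x)) := by
  rw [Setoid.le_def]
  intro x y hxy
  rcases hxy with rfl | rfl
  · rfl
  show i (halfF x) = i (halfF (qP S x))
  rw [Setoid.le_def] at h
  rcases Nat.even_or_odd x.val with he | he
  · rw [Nat.even_iff] at he
    rw [eq_dEven_of_even he, qP_dEven, halfF_dEven, halfF_dOdd]
    exact h (rel_prevP S (halfF x))
  · rw [Nat.odd_iff] at he
    rw [eq_dOdd_of_odd he, qP_dOdd, halfF_dOdd, halfF_dEven]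
    exact h (rel_nextP S (halfF x))

variable {n : ℕ}

section pairs

variable {m : ℕ} {σ : Setoid (Fin m)}

/-- The partner function of a pairing. -/
noncomputable def pf (hp : IsPairing σ) (x : Fin m) : Fin m := (hp x).choose

lemma pf_ne (hp : IsPairing σ) (x : Fin m) : pf hp x ≠ x := (hp x).choose_spec.1

lemma rel_pf (hp : IsPairing σ) (x : Fin m) : σ.r x (pf hp x) := (hp x).choose_spec.2.1

lemma pf_eq (hp : IsPairing σ) {x z : Fin m} (h : σ.r x z) : z = x ∨ z = pf hp x :=
  (hp x).choose_spec.2.2 z h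

lemma pf_invol (hp : IsPairing σ) (x : Fin m) : pf hp (pf hp x) = x := by
  rcases pf_eq hp (σ.iseqv.symm (rel_pf hp x)) with h | h
  · exact absurd h.symm (pf_ne hp x)
  · exact h.symm

lemma pf_unique (hp : IsPairing σ) {x y : Fin m} (h : σ.r x y) (hne : y ≠ x) :
    y = pf hp x := by
  rcases pf_eq hp h with h2 | h2
  · exact absurd h2 hne
  · exact h2

lemma pf_inj (hp : IsPairing σ) : Function.Injective (pf hp) :=
  Function.LeftInverse.injective (pf_invol hp)

/-- The partner of a point strictly between `x` and `pf x` is also strictly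
between them. -/
lemma pf_mem_Ioo (hnc : IsNC σ) (hp : IsPairing σ) {x z : Fin m}
    (hlt : x < pf hp x) (hz : z ∈ Finset.Ioo x (pf hp x)) :
    pf hp z ∈ Finset.Ioo x (pf hp x) := by
  rw [Finset.mem_Ioo] at hz ⊢
  obtain ⟨hxz, hzy⟩ := hz
  have hwne : pf hp z ≠ x := by
    intro h
    have h1 : σ.r z x := h ▸ rel_pf hp z
    rcases pf_eq hp (σ.iseqv.symm h1) with h2 | h2
    · exact absurd h2 (ne_of_gt hxz)
    · rw [h2] at hzy; exact lt_irrefl _ hzy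
  have hwney : pf hp z ≠ pf hp x := by
    intro h
    have := pf_inj hp h
    rw [this] at hxz; exact lt_irrefl x hxz
  rcases lt_trichotomy (pf hp z) x with h | h | h
  · exfalso
    have hcross := hnc (pf hp z) x z (pf hp x) h hxz hzy
      (σ.iseqv.symm (rel_pf hp z)) (rel_pf hp x)
    have h1 : σ.r z x := σ.iseqv.trans (rel_pf hp z) hcross
    rcases pf_eq hp (σ.iseqv.symm h1) with h2 | h2
    · exact absurd h2 (ne_of_gt hxz)
    · rw [h2] at hzy; exact lt_irrefl _ hzy
  · exact absurd h hwne
  · rcases lt_trichotomy (pf hp z) (pf hp x) with h2 | h2 | h2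
    · exact ⟨h, h2⟩
    · exact absurd h2 hwney
    · exfalso
      have hcross := hnc x z (pf hp x) (pf hp z) hxz hzy h2 (rel_pf hp x) (rel_pf hp z)
      rcases pf_eq hp hcross with h3 | h3
      · exact absurd h3 (ne_of_gt hxz)
      · rw [h3] at hzy; exact lt_irrefl _ hzy

/-- An involution without fixed points on a finset gives it even cardinality. -/
lemma even_card_of_invol {α : Type*} [DecidableEq α] (f : α → α) :
    ∀ (N : ℕ) (S : Finset α), S.card = N → (∀ x ∈ S, f x ∈ S) → (∀ x ∈ S, f (f x) = x) →
      (∀ x ∈ S, f x ≠ x) → Even S.card := by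
  intro N
  induction N using Nat.strong_induction_on with
  | _ N ih =>
    intro S hcard hmaps hinv hne
    rcases S.eq_empty_or_nonempty with rfl | ⟨x, hx⟩
    · simp
    have hfx : f x ∈ S := hmaps x hx
    have hfxne : f x ≠ x := hne x hx
    have hmem : f x ∈ S.erase x := Finset.mem_erase.mpr ⟨hfxne, hfx⟩
    have h2 : 2 ≤ S.card := by
      have h1 := Finset.card_erase_of_mem hx
      have := Finset.card_pos.mpr ⟨f x, hmem⟩
      omega
    set S' := (S.erase x).erase (f x) with hS'
    have hcard' : S'.card = S.card - 2 := by
      rw [hS', Finset.card_erase_of_mem hmem, Finset.card_erase_of_mem hx]; omega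
    have hsub : ∀ y ∈ S', y ∈ S ∧ y ≠ x ∧ y ≠ f x := by
      intro y hy
      rw [hS', Finset.mem_erase, Finset.mem_erase] at hy
      exact ⟨hy.2.2, hy.2.1, hy.1⟩
    have hmaps' : ∀ y ∈ S', f y ∈ S' := by
      intro y hy
      obtain ⟨hyS, hyx, hyfx⟩ := hsub y hy
      rw [hS', Finset.mem_erase, Finset.mem_erase]
      refine ⟨?_, ?_, hmaps y hyS⟩
      · intro h; apply hyx; rw [← hinv y hyS, h, hinv x hx]
      · intro h; apply hyfx; rw [← hinv y hyS, h]
    have := ih S'.card (by omega) S' rfl hmaps'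
      (fun y hy => hinv y (hsub y hy).1) (fun y hy => hne y (hsub y hy).1)
    rw [hcard'] at this
    obtain ⟨t, ht⟩ := this
    exact ⟨t + 1, by omega⟩

/-- In a non-crossing pairing, partners have opposite parity. -/
lemma pf_parity (hnc : IsNC σ) (hp : IsPairing σ) (x : Fin m) :
    (pf hp x).val % 2 ≠ x.val % 2 := by
  have key : ∀ x : Fin m, x < pf hp x → (pf hp x).val % 2 ≠ x.val % 2 := by
    intro x hlt
    have heven : Even (Finset.Ioo x (pf hp x)).card := by
      apply even_card_of_invol (pf hp) _ _ rfl
      · intro z hz; exact pf_mem_Ioo hnc hp hlt hz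
      · intro z _; exact pf_invol hp z
      · intro z _; exact pf_ne hp z
    rw [Fin.card_Ioo] at heven
    obtain ⟨t, ht⟩ := heven
    rw [Fin.lt_def] at hlt
    omega
  rcases lt_trichotomy x (pf hp x) with h | h | h
  · exact key x h
  · exact absurd h.symm (pf_ne hp x)
  · have := key (pf hp x) (by rw [pf_invol hp x]; exact h)
    rw [pf_invol hp x] at this
    omega

end pairs

variable {n : ℕ}

section unfat

variable {σ : Setoid (Fin (2*n))}

/-- The index-level partner of odd points. -/
noncomputable def pidx (hp : IsPairing σ) (j : Fin n) : Fin n := halfF (pf hp (dOdd j))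

/-- The index-level partner of even points. -/
noncomputable def qidx (hp : IsPairing σ) (j : Fin n) : Fin n := halfF (pf hp (dEven j))

lemma pf_dOdd (hnc : IsNC σ) (hp : IsPairing σ) (j : Fin n) :
    pf hp (dOdd j) = dEven (pidx hp j) := by
  have h := pf_parity hnc hp (dOdd j)
  simp only [dOdd_val] at h
  have : (pf hp (dOdd j)).val % 2 = 0 := by omega
  exact eq_dEven_of_even this

lemma pf_dEven (hnc : IsNC σ) (hp : IsPairing σ) (j : Fin n) :
    pf hp (dEven j) = dOdd (qidx hp j) := by
  have h := pf_parity hnc hp (dEven j)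
  simp only [dEven_val] at h
  have : (pf hp (dEven j)).val % 2 = 1 := by omega
  exact eq_dOdd_of_odd this

lemma pidx_qidx (hnc : IsNC σ) (hp : IsPairing σ) (j : Fin n) :
    pidx hp (qidx hp j) = j := by
  have h1 : pf hp (dOdd (qidx hp j)) = dEven j := by
    rw [← pf_dEven hnc hp j, pf_invol]
  have h2 := pf_dOdd hnc hp (qidx hp j)
  rw [h1] at h2
  exact (dEven_inj h2.symm)

lemma qidx_pidx (hnc : IsNC σ) (hp : IsPairing σ) (j : Fin n) :
    qidx hp (pidx hp j) = j := by
  have h1 : pf hp (dEven (pidx hp j)) = dOdd j := by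
    rw [← pf_dOdd hnc hp j, pf_invol]
  have h2 := pf_dEven hnc hp (pidx hp j)
  rw [h1] at h2
  exact (dOdd_inj h2.symm)

lemma pidx_inj (hnc : IsNC σ) (hp : IsPairing σ) : Function.Injective (pidx hp) :=
  Function.LeftInverse.injective (qidx_pidx hnc hp)

lemma eqvGen_closed {α : Type*} {f : α → α} {T : Set α} (h1 : ∀ a ∈ T, f a ∈ T)
    (h2 : ∀ a, f a ∈ T → a ∈ T) {a b : α}
    (h : Relation.EqvGen (fun a b => f a = b) a b) : a ∈ T ↔ b ∈ T := by
  induction h with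
  | rel a b hab => exact hab ▸ ⟨fun ha => h1 a ha, fun hb => h2 a (hab ▸ hb)⟩
  | refl => exact Iff.rfl
  | symm _ _ _ ih => exact ih.symm
  | trans _ _ _ _ _ ih1 ih2 => exact ih1.trans ih2

lemma orbit_r {m : ℕ} (f : Fin m → Fin m) (a b : Fin m) :
    (orbitSetoid f).r a b ↔ Relation.EqvGen (fun a b => f a = b) a b := Iff.rfl

/-- Invariance of the open index interval `(j, pidx j)` (ascending pair). -/
lemma Tinv_lt (hnc : IsNC σ) (hp : IsPairing σ) {j : Fin n}
    (h : j.val < (pidx hp j).val) :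
    (∀ m : Fin n, j.val < m.val ∧ m.val < (pidx hp j).val →
      j.val < (pidx hp m).val ∧ (pidx hp m).val < (pidx hp j).val) ∧
    (∀ m : Fin n, j.val < (pidx hp m).val ∧ (pidx hp m).val < (pidx hp j).val →
      j.val < m.val ∧ m.val < (pidx hp j).val) := by
  have hbase : dOdd j < pf hp (dOdd j) := by
    rw [pf_dOdd hnc hp, Fin.lt_def]; simp; omega
  constructor
  · intro m ⟨h1, h2⟩
    have hz : dOdd m ∈ Finset.Ioo (dOdd j) (pf hp (dOdd j)) := by
      rw [pf_dOdd hnc hp, Finset.mem_Ioo, Fin.lt_def, Fin.lt_def]; simp; omega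
    have := pf_mem_Ioo hnc hp hbase hz
    rw [pf_dOdd hnc hp, pf_dOdd hnc hp, Finset.mem_Ioo, Fin.lt_def, Fin.lt_def] at this
    simp only [dEven_val, dOdd_val] at this
    omega
  · intro m ⟨h1, h2⟩
    have hz : dEven (pidx hp m) ∈ Finset.Ioo (dOdd j) (pf hp (dOdd j)) := by
      rw [pf_dOdd hnc hp, Finset.mem_Ioo, Fin.lt_def, Fin.lt_def]; simp; omega
    have := pf_mem_Ioo hnc hp hbase hz
    have hpe : pf hp (dEven (pidx hp m)) = dOdd m := by
      rw [← pf_dOdd hnc hp m, pf_invol]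
    rw [hpe, pf_dOdd hnc hp, Finset.mem_Ioo, Fin.lt_def, Fin.lt_def] at this
    simp only [dEven_val, dOdd_val] at this
    omega

/-- Invariance of the closed index interval `[pidx j, j]` (descending pair). -/
lemma Tinv_le (hnc : IsNC σ) (hp : IsPairing σ) {j : Fin n}
    (h : (pidx hp j).val < j.val) :
    (∀ m : Fin n, (pidx hp j).val ≤ m.val ∧ m.val ≤ j.val →
      (pidx hp j).val ≤ (pidx hp m).val ∧ (pidx hp m).val ≤ j.val) ∧
    (∀ m : Fin n, (pidx hp j).val ≤ (pidx hp m).val ∧ (pidx hp m).val ≤ j.val →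
      (pidx hp j).val ≤ m.val ∧ m.val ≤ j.val) := by
  have hqk : pf hp (dEven (pidx hp j)) = dOdd j := by
    rw [← pf_dOdd hnc hp j, pf_invol]
  have hbase : dEven (pidx hp j) < pf hp (dEven (pidx hp j)) := by
    rw [hqk, Fin.lt_def]; simp; omega
  constructor
  · intro m ⟨h1, h2⟩
    by_cases hm : m = j
    · subst hm; omega
    · have hmlt : m.val < j.val := by
        rcases lt_or_eq_of_le h2 with h3 | h3
        · exact h3
        · exact absurd (Fin.ext h3) hm
      have hz : dOdd m ∈ Finset.Ioo (dEven (pidx hp j)) (pf hp (dEven (pidx hp j))) := by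
        rw [hqk, Finset.mem_Ioo, Fin.lt_def, Fin.lt_def]; simp; omega
      have := pf_mem_Ioo hnc hp hbase hz
      rw [hqk, pf_dOdd hnc hp, Finset.mem_Ioo, Fin.lt_def, Fin.lt_def] at this
      simp only [dEven_val, dOdd_val] at this
      omega
  · intro m ⟨h1, h2⟩
    by_cases hm : pidx hp m = pidx hp j
    · have := pidx_inj hnc hp hm
      subst this; omega
    · have h1' : (pidx hp j).val < (pidx hp m).val := by
        rcases lt_or_eq_of_le h1 with h3 | h3
        · exact h3
        · exact absurd (Fin.ext h3.symm) hm
      have hz : dEven (pidx hp m) ∈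
          Finset.Ioo (dEven (pidx hp j)) (pf hp (dEven (pidx hp j))) := by
        rw [hqk, Finset.mem_Ioo, Fin.lt_def, Fin.lt_def]; simp; omega
      have := pf_mem_Ioo hnc hp hbase hz
      have hpe : pf hp (dEven (pidx hp m)) = dOdd m := by
        rw [← pf_dOdd hnc hp m, pf_invol]
      rw [hpe, hqk, Finset.mem_Ioo, Fin.lt_def, Fin.lt_def] at this
      simp only [dEven_val, dOdd_val] at this
      omega

/-- Key structure lemma: the increasing-cycle permutation of the orbit partition
of `pidx` is `pidx` itself. -/
lemma nextP_unfat (hnc : IsNC σ) (hp : IsPairing σ) (j : Fin n) :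
    nextP (orbitSetoid (pidx hp)) j = pidx hp j := by
  set π := orbitSetoid (pidx hp) with hπ
  have hgen : π.r j (pidx hp j) := Relation.EqvGen.rel _ _ rfl
  rcases lt_trichotomy (pidx hp j).val j.val with hc | hc | hc
  · -- descending pair: j is max of its block, pidx j is its min
    obtain ⟨hfwd, hbwd⟩ := Tinv_le hnc hp hc
    have hclosed : ∀ m, π.r j m →
        (pidx hp j).val ≤ m.val ∧ m.val ≤ j.val := by
      intro m hm
      have := eqvGen_closed (T := {m : Fin n | (pidx hp j).val ≤ m.val ∧ m.val ≤ j.val})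
        (fun a ha => hfwd a ha) (fun a ha => hbwd a ha) hm
      exact this.mp ⟨le_of_lt hc, le_refl _⟩
    rcases nextP_spec π j with ⟨h1, _⟩ | ⟨_, hmin⟩
    · exfalso
      have := hclosed _ (rel_nextP π j)
      rw [Fin.lt_def] at h1
      omega
    · apply le_antisymm (hmin _ hgen)
      have := hclosed _ (rel_nextP π j)
      rw [Fin.le_def]
      omega
  · -- fixed point: the block is a singleton
    have hfix : pidx hp j = j := Fin.ext hc
    have hsingle : ∀ m, π.r j m → m = j := by
      intro m hm
      have hcl := eqvGen_closed (T := {m : Fin n | m = j})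
        (fun a ha => by simp only [Set.mem_setOf_eq] at ha ⊢; rw [ha, hfix])
        (fun a ha => by
          simp only [Set.mem_setOf_eq] at ha ⊢
          exact pidx_inj hnc hp (by rw [ha, hfix]))
        hm
      exact hcl.mp rfl
    rw [hsingle _ (rel_nextP π j), hfix]
  · -- ascending pair
    obtain ⟨hfwd, hbwd⟩ := Tinv_lt hnc hp hc
    have hclosed : ∀ m, π.r j m →
        ¬(j.val < m.val ∧ m.val < (pidx hp j).val) := by
      intro m hm hmem
      have := eqvGen_closed (T := {m : Fin n | j.val < m.val ∧ m.val < (pidx hp j).val})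
        (fun a ha => hfwd a ha) (fun a ha => hbwd a ha) hm
      have := this.mpr hmem
      simp only [Set.mem_setOf_eq] at this
      omega
    rcases nextP_spec π j with ⟨h1, hmin⟩ | ⟨hmax, _⟩
    · apply le_antisymm (hmin _ hgen (Fin.lt_def.mpr hc))
      have h2 := hclosed _ (rel_nextP π j)
      rw [Fin.lt_def] at h1
      rw [Fin.le_def]
      omega
    · exfalso
      have := hmax _ hgen
      rw [Fin.le_def] at this
      omega

end unfat

variable {n : ℕ} {σ : Setoid (Fin (2*n))}

/-- The orbit partition of `pidx` is non-crossing. -/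
lemma unfat_nc (hnc : IsNC σ) (hp : IsPairing σ) : IsNC (orbitSetoid (pidx hp)) := by
  intro a b c d hab hbc hcd hac hbd
  by_contra hnab
  set π := orbitSetoid (pidx hp) with hπ
  have hUne : (Finset.filter (fun m => π.r a m ∧ m ≤ b) Finset.univ).Nonempty :=
    ⟨a, by simp only [Finset.mem_filter, Finset.mem_univ, true_and]
           exact ⟨π.iseqv.refl a, le_of_lt hab⟩⟩
  obtain ⟨-, hrau, hub⟩ :=
    Finset.mem_filter.mp (Finset.max'_mem _ hUne)
  have hune : (Finset.filter (fun m => π.r a m ∧ m ≤ b) Finset.univ).max' hUne ≠ b :=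
    fun h => hnab (h ▸ hrau)
  set u := (Finset.filter (fun m => π.r a m ∧ m ≤ b) Finset.univ).max' hUne with hu
  have hult : u < b := lt_of_le_of_ne hub hune
  have hruc : π.r u c := π.iseqv.trans (π.iseqv.symm hrau) hac
  have hucx : u < c := lt_trans hult hbc
  rcases nextP_spec π u with ⟨h1, hmin⟩ | ⟨hmax, _⟩
  · have hveq : nextP π u = pidx hp u := nextP_unfat hnc hp u
    have hminc : nextP π u ≤ c := hmin c hruc hucx
    have hbv : b < nextP π u := by
      by_contra hle
      push_neg at hle
      have hmem : nextP π u ∈ Finset.filter (fun m => π.r a m ∧ m ≤ b) Finset.univ := by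
        rw [Finset.mem_filter]
        exact ⟨Finset.mem_univ _, π.iseqv.trans hrau (rel_nextP π u), hle⟩
      have := Finset.le_max' _ _ hmem
      rw [← hu] at this
      exact absurd h1 (not_lt.mpr this)
    have hcu : u.val < (pidx hp u).val := by
      rw [← hveq]; exact Fin.lt_def.mp h1
    obtain ⟨hfwd, hbwd⟩ := Tinv_lt hnc hp hcu
    have hbT : u.val < b.val ∧ b.val < (pidx hp u).val :=
      ⟨Fin.lt_def.mp hult, by rw [← hveq]; exact Fin.lt_def.mp hbv⟩
    have hdT := (eqvGen_closed
      (T := {m : Fin n | u.val < m.val ∧ m.val < (pidx hp u).val})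
      (fun x hx => hfwd x hx) (fun x hx => hbwd x hx) hbd).mp hbT
    simp only [Set.mem_setOf_eq] at hdT
    have hcv : (pidx hp u).val ≤ c.val := by
      rw [← hveq]; exact Fin.le_def.mp hminc
    have hcd' := Fin.lt_def.mp hcd
    omega
  · exact absurd (hmax c hruc) (not_le.mpr hucx)

/-- The orbit partition refines the kernel. -/
lemma unfat_ker (hnc : IsNC σ) (hp : IsPairing σ) {d : ℕ} {i : Fin n → Fin d}
    (h : σ ≤ Setoid.ker (fun x : Fin (2*n) => i (halfF x))) :
    orbitSetoid (pidx hp) ≤ Setoid.ker i := by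
  rw [Setoid.le_def] at h ⊢
  intro a b hab
  have hab' : Relation.EqvGen (fun a b => pidx hp a = b) a b := hab
  clear hab
  induction hab' with
  | rel x y hxy =>
    have := h (rel_pf hp (dOdd x))
    rw [pf_dOdd hnc hp, Setoid.ker_def] at this
    simp only [halfF_dOdd, halfF_dEven] at this
    rw [Setoid.ker_def, ← hxy]
    exact this
  | refl x => rfl
  | symm _ _ _ ih => exact ih.symm
  | trans _ _ _ _ _ ih1 ih2 => exact ih1.trans ih2

/-- Right inverse: fattening the orbit partition recovers the pairing. -/
lemma fatten_unfat (hnc : IsNC σ) (hp : IsPairing σ) :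
    fatten (orbitSetoid (pidx hp)) = σ := by
  set π := orbitSetoid (pidx hp) with hπ
  have hq : ∀ x, qP π x = pf hp x := by
    intro x
    rcases Nat.even_or_odd x.val with he | he
    · rw [Nat.even_iff] at he
      rw [eq_dEven_of_even he, qP_dEven]
      have h1 : nextP π (qidx hp (halfF x)) = halfF x := by
        rw [nextP_unfat hnc hp, pidx_qidx hnc hp]
      have h2 : prevP π (halfF x) = qidx hp (halfF x) := by
        conv_lhs => rw [← h1]
        rw [prevP_nextP]
      rw [h2, ← pf_dEven hnc hp]
    · rw [Nat.odd_iff] at he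
      rw [eq_dOdd_of_odd he, qP_dOdd, nextP_unfat hnc hp, ← pf_dOdd hnc hp]
  apply Setoid.ext
  intro x y
  constructor
  · intro hxy
    rcases hxy with rfl | rfl
    · exact σ.iseqv.refl x
    · rw [hq]; exact rel_pf hp x
  · intro hxy
    by_cases hyx : y = x
    · exact Or.inl hyx.symm
    · right
      rw [hq]
      exact (pf_unique hp hxy hyx).symm

/-- Reaching every element of a block by iterating `nextP`. -/
lemma reach (π : Setoid (Fin n)) (j k : Fin n) (hjk : π.r j k) :
    Relation.EqvGen (fun a b => nextP π a = b) j k := by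
  have main : ∀ (v : ℕ) (k : Fin n), k.val = v → π.r j k →
      Relation.EqvGen (fun a b => nextP π a = b)
        ((blockOf π j).min' (blockOf_nonempty π j)) k := by
    intro v
    induction v using Nat.strong_induction_on with
    | _ v ih =>
      intro k hkv hk
      have hm0mem : (blockOf π j).min' (blockOf_nonempty π j) ∈ blockOf π j :=
        Finset.min'_mem _ _
      have hm0rel : π.r j ((blockOf π j).min' (blockOf_nonempty π j)) :=
        mem_blockOf.mp hm0mem
      by_cases hkm : k = (blockOf π j).min' (blockOf_nonempty π j)
      · rw [hkm]; exact Relation.EqvGen.refl _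
      · have hm0le : (blockOf π j).min' (blockOf_nonempty π j) ≤ k :=
          Finset.min'_le _ _ (mem_blockOf.mpr hk)
        have hm0lt : (blockOf π j).min' (blockOf_nonempty π j) < k :=
          lt_of_le_of_ne hm0le (fun h => hkm h.symm)
        rcases prevP_spec π k with ⟨hlt, _⟩ | ⟨hmin, _⟩
        · have hrelk' : π.r j (prevP π k) := π.iseqv.trans hk (rel_prevP π k)
          have hvlt : (prevP π k).val < v := by
            rw [← hkv]; exact Fin.lt_def.mp hlt
          have ihh := ih (prevP π k).val hvlt (prevP π k) rfl hrelk'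
          exact Relation.EqvGen.trans _ _ _ ihh
            (Relation.EqvGen.rel _ _ (nextP_prevP π k))
        · exfalso
          have : π.r k ((blockOf π j).min' (blockOf_nonempty π j)) :=
            π.iseqv.trans (π.iseqv.symm hk) hm0rel
          exact absurd (hmin _ this) (not_le.mpr hm0lt)
  have h1 := main j.val j rfl (π.iseqv.refl j)
  have h2 := main k.val k rfl hjk
  exact Relation.EqvGen.trans _ _ _ (Relation.EqvGen.symm _ _ h1) h2

/-- Left inverse: the orbit partition of the fattening recovers the partition. -/
lemma unfat_fatten (π : Setoid (Fin n)) (hp' : IsPairing (fatten π)) :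
    orbitSetoid (pidx hp') = π := by
  have hpf : ∀ x, pf hp' x = qP π x :=
    fun x => (pf_unique hp' (Or.inr rfl) (qP_ne π x)).symm
  have hpidx : ∀ j, pidx hp' j = nextP π j := by
    intro j
    show halfF (pf hp' (dOdd j)) = _
    rw [hpf, qP_dOdd, halfF_dEven]
  apply Setoid.ext
  intro a b
  constructor
  · intro h
    have h' : Relation.EqvGen (fun a b => pidx hp' a = b) a b := h
    clear h
    induction h' with
    | rel x y hxy =>
      rw [hpidx] at hxy
      exact hxy ▸ rel_nextP π x
    | refl x => exact π.iseqv.refl x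
    | symm _ _ _ ih => exact π.iseqv.symm ih
    | trans _ _ _ _ _ ih1 ih2 => exact π.iseqv.trans ih1 ih2
  · intro h
    have hfun : (fun a b => pidx hp' a = b) = (fun a b => nextP π a = b) := by
      funext x y
      rw [hpidx]
    show Relation.EqvGen (fun a b => pidx hp' a = b) a b
    rw [hfun]
    exact reach π a b h

variable {n : ℕ}

/-- The fattening bijection between constrained noncrossing partitions of `[n]`
and constrained noncrossing pairings of `[2n]`. -/
noncomputable def fattenEquiv {d : ℕ} (i : Fin n → Fin d) :
    {π : Setoid (Fin n) // IsNC π ∧ π ≤ Setoid.ker i} ≃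
    {σ : Setoid (Fin (2*n)) // IsNC σ ∧ IsPairing σ ∧
      σ ≤ Setoid.ker (fun x : Fin (2*n) => i (halfF x))} where
  toFun p := ⟨fatten p.1, fatten_nc p.2.1, fatten_pairing p.1, fatten_ker p.2.2⟩
  invFun s := ⟨orbitSetoid (pidx s.2.2.1),
    unfat_nc s.2.1 s.2.2.1, unfat_ker s.2.1 s.2.2.1 s.2.2.2⟩
  left_inv p := Subtype.ext (unfat_fatten p.1 _)
  right_inv s := Subtype.ext (fatten_unfat s.2.1 s.2.2.1)

lemma card_pairings {d : ℕ} (i : Fin n → Fin d) :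
    Nat.card {σ : Setoid (Fin (2*n)) // IsNC σ ∧ IsPairing σ ∧
      σ ≤ Setoid.ker (fun x : Fin (2*n) => i (halfF x))} =
    Nat.card {π : Setoid (Fin n) // IsNC π ∧ π ≤ Setoid.ker i} :=
  (Nat.card_congr (fattenEquiv i)).symm

/-- Functions whose kernel lies above `s` correspond to functions on the quotient. -/
noncomputable def kerEquiv (s : Setoid (Fin n)) (d : ℕ) :
    (Quotient s → Fin d) ≃ {i : Fin n → Fin d // s ≤ Setoid.ker i} where
  toFun f := ⟨fun x => f (Quotient.mk s x), by
    rw [Setoid.le_def]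
    intro x y hxy
    rw [Setoid.ker_def]
    exact congrArg f (Quotient.sound hxy)⟩
  invFun g := Quotient.lift g.1 (fun a b hab => Setoid.ker_def.mp (Setoid.le_def.mp g.2 hab))
  left_inv f := funext fun q => Quotient.inductionOn q (fun x => rfl)
  right_inv g := rfl

lemma card_le_ker (s : Setoid (Fin n)) (d : ℕ) :
    Nat.card {i : Fin n → Fin d // s ≤ Setoid.ker i} = d ^ Nat.card (Quotient s) := by
  rw [← Nat.card_congr (kerEquiv s d), Nat.card_fun, Nat.card_eq_fintype_card (α := Fin d),
    Fintype.card_fin]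

noncomputable instance setoidFintype : Fintype (Setoid (Fin n)) :=
  Fintype.ofInjective (fun s : Setoid (Fin n) => s.r)
    (fun a b h => Setoid.ext (fun {x y} => by rw [show a.r = b.r from h]))

set_option maxHeartbeats 1000000 in
lemma count_main (n d : ℕ) :
    ∑ g : Fin n → Fin d,
      (Nat.card {π : Setoid (Fin n) // IsNC π ∧ π ≤ Setoid.ker g} *
       Nat.card {π : Setoid (Fin n) // IsNC π ∧ π ≤ Setoid.ker g})
    = ∑ pr ∈ Finset.univ.filter
        (fun pr : Setoid (Fin n) × Setoid (Fin n) => IsNC pr.1 ∧ IsNC pr.2),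
        d ^ (Nat.card (Quotient (pr.1 ⊔ pr.2))) := by
  have hM : ∀ g : Fin n → Fin d,
      Nat.card {π : Setoid (Fin n) // IsNC π ∧ π ≤ Setoid.ker g} =
      (Finset.univ.filter (fun π : Setoid (Fin n) => IsNC π ∧ π ≤ Setoid.ker g)).card := by
    intro g; rw [Nat.card_eq_fintype_card, Fintype.card_subtype]
  have hD : ∀ pr : Setoid (Fin n) × Setoid (Fin n),
      d ^ (Nat.card (Quotient (pr.1 ⊔ pr.2))) =
      (Finset.univ.filter (fun g : Fin n → Fin d => pr.1 ⊔ pr.2 ≤ Setoid.ker g)).card := by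
    intro pr
    rw [← card_le_ker (pr.1 ⊔ pr.2) d, Nat.card_eq_fintype_card, Fintype.card_subtype]
  simp_rw [hM, hD]
  -- turn everything into triple sums of indicators
  have key : ∀ π ρ : Setoid (Fin n),
      (∑ g : Fin n → Fin d,
        if (IsNC π ∧ π ≤ Setoid.ker g) ∧ (IsNC ρ ∧ ρ ≤ Setoid.ker g) then 1 else 0)
      = if IsNC π ∧ IsNC ρ then
          (Finset.univ.filter (fun g : Fin n → Fin d => π ⊔ ρ ≤ Setoid.ker g)).card
        else 0 := by
    intro π ρ
    by_cases h : IsNC π ∧ IsNC ρ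
    · rw [if_pos h, Finset.card_filter]
      apply Finset.sum_congr rfl
      intro g _
      have hiff : ((IsNC π ∧ π ≤ Setoid.ker g) ∧ (IsNC ρ ∧ ρ ≤ Setoid.ker g)) ↔
          (π ⊔ ρ ≤ Setoid.ker g) := by
        constructor
        · rintro ⟨⟨_, h1⟩, ⟨_, h2⟩⟩; exact sup_le h1 h2
        · intro hle
          exact ⟨⟨h.1, le_trans le_sup_left hle⟩, ⟨h.2, le_trans le_sup_right hle⟩⟩
      rw [if_congr hiff rfl rfl]
    · rw [if_neg h]
      apply Finset.sum_eq_zero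
      intro g _
      rw [if_neg]
      tauto
  calc ∑ g : Fin n → Fin d,
        ((Finset.univ.filter (fun π : Setoid (Fin n) => IsNC π ∧ π ≤ Setoid.ker g)).card *
         (Finset.univ.filter (fun π : Setoid (Fin n) => IsNC π ∧ π ≤ Setoid.ker g)).card)
      = ∑ g : Fin n → Fin d, ∑ π : Setoid (Fin n), ∑ ρ : Setoid (Fin n),
          if (IsNC π ∧ π ≤ Setoid.ker g) ∧ (IsNC ρ ∧ ρ ≤ Setoid.ker g) then 1 else 0 := by
        apply Finset.sum_congr rfl
        intro g _
        rw [Finset.card_filter, Finset.sum_mul_sum]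
        simp_rw [ite_zero_mul_ite_zero, one_mul]
    _ = ∑ π : Setoid (Fin n), ∑ ρ : Setoid (Fin n), ∑ g : Fin n → Fin d,
          if (IsNC π ∧ π ≤ Setoid.ker g) ∧ (IsNC ρ ∧ ρ ≤ Setoid.ker g) then 1 else 0 := by
        rw [Finset.sum_comm]
        apply Finset.sum_congr rfl
        intro π _
        rw [Finset.sum_comm]
    _ = ∑ π : Setoid (Fin n), ∑ ρ : Setoid (Fin n),
          if IsNC π ∧ IsNC ρ then
            (Finset.univ.filter (fun g : Fin n → Fin d => π ⊔ ρ ≤ Setoid.ker g)).card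
          else 0 := by
        apply Finset.sum_congr rfl
        intro π _
        apply Finset.sum_congr rfl
        intro ρ _
        exact key π ρ
    _ = ∑ pr ∈ Finset.univ.filter
          (fun pr : Setoid (Fin n) × Setoid (Fin n) => IsNC pr.1 ∧ IsNC pr.2),
          (Finset.univ.filter
            (fun g : Fin n → Fin d => pr.1 ⊔ pr.2 ≤ Setoid.ker g)).card := by
        rw [Finset.sum_filter, Fintype.sum_prod_type]


end MD

open TensorProduct in
/-- Let `a_1,…,a_d` be a free family of self-adjoint standard semicircular
elements of a `*`-probability space `(𝒜,φ)` (so that mixed moments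
`φ(a_{i(1)}⋯a_{i(m)})` count the non-crossing pairings `σ` of `{1,…,m}` with
`σ ≤ ker i`), and let `y = Σ_i a_i² ⊗ a_i² ∈ (𝒜 ⊗ 𝒜, φ ⊗ φ)`.  Then
`(φ⊗φ)(y^n) = Σ_{π,ρ ∈ NC(n)} d^{|π ∨̃ ρ|}`, where `∨̃` is the join in the
lattice of all partitions of `{1,…,n}` and `|·|` is the number of blocks. -/
theorem tensor_semicircular_squares_moments
    (A : Type*) [Ring A] [Algebra ℂ A] [StarRing A]
    (φ : A →ₗ[ℂ] ℂ) (hφ1 : φ 1 = 1)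
    (hpos : ∀ z : A, ∃ r : ℝ, 0 ≤ r ∧ φ (star z * z) = (r : ℂ))
    (d : ℕ) (a : Fin d → A) (hsa : ∀ i, star (a i) = a i)
    (hfree : ∀ (m : ℕ) (i : Fin m → Fin d),
      φ ((List.ofFn fun k => a (i k)).prod) =
        (Nat.card {σ : Setoid (Fin m) //
          IsNC σ ∧ IsPairing σ ∧ σ ≤ Setoid.ker i} : ℂ)) :
    ∀ n : ℕ, 0 < n →
      (TensorProduct.lid ℂ ℂ) ((TensorProduct.map φ φ)
          ((∑ i, ((a i) ^ 2) ⊗ₜ[ℂ] ((a i) ^ 2)) ^ n)) =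
        ∑ᶠ pr ∈ {pr : Setoid (Fin n) × Setoid (Fin n) | IsNC pr.1 ∧ IsNC pr.2},
          (d : ℂ) ^ (Nat.card (Quotient (pr.1 ⊔ pr.2))) := by
  intro n hn
  classical
  rw [MD.sum_pow_expand (fun i => ((a i) ^ 2) ⊗ₜ[ℂ] ((a i) ^ 2)) n, map_sum, map_sum]
  have hterm : ∀ g : Fin n → Fin d,
      (TensorProduct.lid ℂ ℂ) ((TensorProduct.map φ φ)
        ((List.ofFn fun k => ((a (g k)) ^ 2) ⊗ₜ[ℂ] ((a (g k)) ^ 2)).prod))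
      = (Nat.card {π : Setoid (Fin n) // IsNC π ∧ π ≤ Setoid.ker g} : ℂ) *
        (Nat.card {π : Setoid (Fin n) // IsNC π ∧ π ≤ Setoid.ker g} : ℂ) := by
    intro g
    rw [MD.prod_tmul, TensorProduct.map_tmul, TensorProduct.lid_tmul, smul_eq_mul]
    have hL : (List.ofFn fun k : Fin n => a (g k) ^ 2).prod
        = (List.ofFn fun k : Fin (2*n) => a (g (MD.halfF k))).prod := by
      have hc := MD.prod_sq_eq_double (fun t => if h : t < n then a (g ⟨t, h⟩) else 1) n
      have e1 : (List.ofFn fun k : Fin n => a (g k) ^ 2)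
          = (List.ofFn fun k : Fin n =>
              (if h : (k : ℕ) < n then a (g ⟨(k : ℕ), h⟩) else 1) *
              (if h : (k : ℕ) < n then a (g ⟨(k : ℕ), h⟩) else 1)) := by
        apply congrArg List.ofFn
        funext k
        rw [dif_pos k.isLt, sq]
      have e2 : (List.ofFn fun k : Fin (2*n) => a (g (MD.halfF k)))
          = (List.ofFn fun k : Fin (2*n) =>
              (if h : (k : ℕ) / 2 < n then a (g ⟨(k : ℕ) / 2, h⟩) else 1)) := by
        apply congrArg List.ofFn
        funext k
        rw [dif_pos (show (k : ℕ) / 2 < n by have := k.isLt; omega)]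
        rfl
      rw [e1, e2]
      exact hc
    rw [hL, hfree (2*n) (fun k : Fin (2*n) => g (MD.halfF k)), MD.card_pairings g]
  rw [Finset.sum_congr rfl (fun g _ => hterm g)]
  have hset : {pr : Setoid (Fin n) × Setoid (Fin n) | IsNC pr.1 ∧ IsNC pr.2}
      = ↑(Finset.univ.filter
          (fun pr : Setoid (Fin n) × Setoid (Fin n) => IsNC pr.1 ∧ IsNC pr.2)) := by
    ext pr; simp
  rw [hset, finsum_mem_coe_finset]
  have hnat := MD.count_main n d
  calc (∑ g : Fin n → Fin d,
        (Nat.card {π : Setoid (Fin n) // IsNC π ∧ π ≤ Setoid.ker g} : ℂ) *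
        (Nat.card {π : Setoid (Fin n) // IsNC π ∧ π ≤ Setoid.ker g} : ℂ))
      = ((∑ g : Fin n → Fin d,
          Nat.card {π : Setoid (Fin n) // IsNC π ∧ π ≤ Setoid.ker g} *
          Nat.card {π : Setoid (Fin n) // IsNC π ∧ π ≤ Setoid.ker g} : ℕ) : ℂ) := by
        push_cast; rfl
    _ = ((∑ pr ∈ Finset.univ.filter
          (fun pr : Setoid (Fin n) × Setoid (Fin n) => IsNC pr.1 ∧ IsNC pr.2),
          d ^ (Nat.card (Quotient (pr.1 ⊔ pr.2))) : ℕ) : ℂ) := by rw [hnat]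
    _ = ∑ pr ∈ Finset.univ.filter
          (fun pr : Setoid (Fin n) × Setoid (Fin n) => IsNC pr.1 ∧ IsNC pr.2),
          (d : ℂ) ^ (Nat.card (Quotient (pr.1 ⊔ pr.2))) := by
        push_cast; rfl
end
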